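/- arXiv:0706.3679 — 2 statements merged into one kernel-verified Lean document; each statement's English description precedes it below -/
import Mathlib

section
/- Let G be a class of functions from a domain X into ℝ^Q (3 ≤ Q < ∞). For every γ ∈ (0,1] and every positive integer m such that 2m ≥ d, where d = N-dim(Δ_γ G, γ/24) is the Natarajan dimension with margin γ/24 of the class Δ_γ G = π_γ ∘ Δ (G), the following bound holds: N^{(p)}_{∞,∞}(γ/4, Δ*_γ G, 2m) < 2 · (288 · m · Q² · (Q−1))^{⌈ d · log₂( 23 e m Q (Q−1) / d ) ⌉}, where Δ*_γ G = π_γ ∘ Δ* (G). -/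
set_option maxHeartbeats 1000000


open Finset

/-- `max_{l ≠ k} v l` : the maximum of the other components. -/
noncomputable def maxOther {Q : ℕ} (v : Fin Q → ℝ) (k : Fin Q) : ℝ :=
  if h : (Finset.univ.erase k).Nonempty then (Finset.univ.erase k).sup' h v else 0

/-- The margin operator `Δ` (acting componentwise on a vector of outputs). -/
noncomputable def deltaVec {Q : ℕ} (v : Fin Q → ℝ) : Fin Q → ℝ :=
  fun k => (v k - maxOther v k) / 2

/-- The margin operator `Δ*`. -/
noncomputable def deltaStarVec {Q : ℕ} (v : Fin Q → ℝ) : Fin Q → ℝ :=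
  fun k => Real.sign (deltaVec v k) *
    (if h : (Finset.univ : Finset (Fin Q)).Nonempty then
      Finset.univ.sup' h (deltaVec v) else 0)

/-- The squashing operator `π_γ`. -/
noncomputable def trunc {Q : ℕ} (γ : ℝ) (v : Fin Q → ℝ) : Fin Q → ℝ :=
  fun k => Real.sign (v k) * min |v k| γ

/-- The pseudo-metric `d_{ℓ∞, ℓ∞(s)}` induced by a finite subset `s` of the domain. -/
noncomputable def dLinf {X : Type*} {Q : ℕ} (s : Finset X) (f g : X → Fin Q → ℝ) : ℝ :=
  if h : s.Nonempty then s.sup' h (fun x => ‖f x - g x‖) else 0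

/-- The proper covering number `N^{(p)}(ε, F, d)` (∞ if no finite proper ε-net exists). -/
noncomputable def properCov {α : Type*} (ε : ℝ) (F : Set α) (d : α → α → ℝ) : ℕ∞ :=
  sInf {n : ℕ∞ | ∃ N : Finset α, ↑N ⊆ F ∧ (∀ f ∈ F, ∃ c ∈ N, d f c < ε) ∧ n = N.card}

/-- `N^{(p)}_{∞,∞}(ε, F, n)`. -/
noncomputable def covNum {X : Type*} {Q : ℕ} (ε : ℝ) (F : Set (X → Fin Q → ℝ)) (n : ℕ) : ℕ∞ :=
  ⨆ s ∈ {s : Finset X | s.card = n}, properCov ε F (dLinf s)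

/-- `γ`-N-shattering of a finite set by a class of `ℝ^Q`-valued functions. -/
def NShatters {X : Type*} {Q : ℕ} (γ : ℝ) (F : Set (X → Fin Q → ℝ)) (s : Finset X) : Prop :=
  ∃ (i₁ i₂ : X → Fin Q) (b : X → ℝ),
    (∀ x ∈ s, i₁ x ≠ i₂ x) ∧
    ∀ y : X → Bool, ∃ f ∈ F, ∀ x ∈ s,
      (y x = true → f x (i₁ x) - b x ≥ γ) ∧ (y x = false → f x (i₂ x) + b x ≥ γ)

/-- The Natarajan dimension with margin `γ`. -/
noncomputable def NdimMargin {X : Type*} {Q : ℕ} (γ : ℝ) (F : Set (X → Fin Q → ℝ)) : ℕ∞ :=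
  ⨆ s ∈ {s : Finset X | NShatters γ F s}, (s.card : ℕ∞)


namespace GSL

variable {Q : ℕ}

lemma univ_ne (hQ : 0 < Q) : (Finset.univ : Finset (Fin Q)).Nonempty :=
  ⟨⟨0, hQ⟩, Finset.mem_univ _⟩

lemma erase_ne (hQ : 2 ≤ Q) (k : Fin Q) : ((Finset.univ : Finset (Fin Q)).erase k).Nonempty := by
  have h1 : ((Finset.univ : Finset (Fin Q)).erase k).card = Q - 1 := by
    rw [Finset.card_erase_of_mem (Finset.mem_univ _), Finset.card_univ, Fintype.card_fin]
  rw [← Finset.card_pos, h1]; omega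

/-- raw margin `M_raw = max_k Δv_k`. -/
noncomputable def Mraw (v : Fin Q → ℝ) : ℝ :=
  if h : (Finset.univ : Finset (Fin Q)).Nonempty then
      Finset.univ.sup' h (deltaVec v) else 0

lemma deltaStar_eq (v : Fin Q → ℝ) (k : Fin Q) :
    deltaStarVec v k = Real.sign (deltaVec v k) * Mraw v := rfl

lemma Mraw_eq (hQ : 0 < Q) (v : Fin Q → ℝ) :
    Mraw v = Finset.univ.sup' (univ_ne hQ) (deltaVec v) := by
  rw [Mraw, dif_pos (univ_ne hQ)]

lemma delta_le_Mraw (hQ : 0 < Q) (v : Fin Q → ℝ) (k : Fin Q) : deltaVec v k ≤ Mraw v := by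
  rw [Mraw_eq hQ]; exact Finset.le_sup' _ (Finset.mem_univ _)

lemma maxOther_eq (hQ : 2 ≤ Q) (v : Fin Q → ℝ) (k : Fin Q) :
    maxOther v k = (Finset.univ.erase k).sup' (erase_ne hQ k) v := by
  rw [maxOther, dif_pos (erase_ne hQ k)]

lemma le_maxOther (hQ : 2 ≤ Q) (v : Fin Q → ℝ) {k l : Fin Q} (hkl : l ≠ k) :
    v l ≤ maxOther v k := by
  rw [maxOther_eq hQ]
  exact Finset.le_sup' _ (Finset.mem_erase.2 ⟨hkl, Finset.mem_univ _⟩)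

lemma maxOther_le (hQ : 2 ≤ Q) (v : Fin Q → ℝ) {k : Fin Q} {a : ℝ}
    (h : ∀ l, l ≠ k → v l ≤ a) : maxOther v k ≤ a := by
  rw [maxOther_eq hQ]
  exact Finset.sup'_le _ _ fun b hb => h b (Finset.mem_erase.1 hb).1

lemma Mraw_nonneg (hQ : 2 ≤ Q) (v : Fin Q → ℝ) : 0 ≤ Mraw v := by
  obtain ⟨t, ht, hts⟩ := Finset.exists_mem_eq_sup' (univ_ne (by omega)) v
  have h1 : maxOther v t ≤ v t := by
    refine maxOther_le hQ v fun l _ => ?_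
    rw [← hts]; exact Finset.le_sup' _ (Finset.mem_univ _)
  have h2 : (0:ℝ) ≤ deltaVec v t := by
    simp only [deltaVec]; linarith
  exact h2.trans (delta_le_Mraw (by omega) v t)

/-- the (chosen) index of the largest component of `Δv`. -/
noncomputable def symA (hQ : 0 < Q) (v : Fin Q → ℝ) : Fin Q :=
  (Finset.exists_mem_eq_sup' (univ_ne hQ) (deltaVec v)).choose

lemma delta_symA (hQ : 0 < Q) (v : Fin Q → ℝ) : deltaVec v (symA hQ v) = Mraw v := by
  rw [Mraw_eq hQ]
  exact (Finset.exists_mem_eq_sup' (univ_ne hQ) (deltaVec v)).choose_spec.2.symm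

lemma delta_pos_unique (hQ : 2 ≤ Q) (v : Fin Q → ℝ) {k l : Fin Q}
    (hk : 0 < deltaVec v k) (hl : k ≠ l) : deltaVec v l < 0 := by
  have h0 : 0 < Q := by omega
  have h1 : maxOther v k < v k := by
    have := hk; simp only [deltaVec] at this; linarith
  have h2 : v l ≤ maxOther v k := le_maxOther hQ v (fun h => hl h.symm)
  have h3 : v k ≤ maxOther v l := le_maxOther hQ v hl
  simp only [deltaVec]; linarith

lemma delta_nonpos (hQ : 2 ≤ Q) (v : Fin Q → ℝ) {k : Fin Q}
    (hk : k ≠ symA (by omega : 0 < Q) v) : deltaVec v k ≤ 0 := by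
  by_contra h
  push_neg at h
  have := delta_pos_unique hQ v h hk
  rw [delta_symA] at this
  exact absurd (Mraw_nonneg hQ v) (not_le.2 this)

lemma delta_zero_off (hQ : 2 ≤ Q) (v : Fin Q → ℝ) {k : Fin Q}
    (hk : k ≠ symA (by omega : 0 < Q) v) (h0 : deltaVec v k = 0) : Mraw v = 0 := by
  have h1 : maxOther v k = v k := by
    simp only [deltaVec] at h0; linarith
  set a := symA (by omega : 0 < Q) v with ha
  have h2 : v a ≤ maxOther v k := le_maxOther hQ v (fun h => hk h.symm)
  have h3 : v k ≤ maxOther v a := le_maxOther hQ v hk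
  have h4 : deltaVec v a ≤ 0 := by simp only [deltaVec]; linarith
  rw [delta_symA] at h4
  exact le_antisymm h4 (Mraw_nonneg hQ v)

/-- the second max of `Δv` (over indices other than `symA`). -/
noncomputable def N2 (hQ : 2 ≤ Q) (v : Fin Q → ℝ) : ℝ :=
  ((Finset.univ : Finset (Fin Q)).erase (symA (by omega) v)).sup'
    (erase_ne hQ _) (deltaVec v)

/-- the (chosen) index of the second largest component of `Δv`. -/
noncomputable def symS (hQ : 2 ≤ Q) (v : Fin Q → ℝ) : Fin Q :=
  (Finset.exists_mem_eq_sup' (erase_ne hQ (symA (by omega) v)) (deltaVec v)).choose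

lemma symS_mem (hQ : 2 ≤ Q) (v : Fin Q → ℝ) :
    symS hQ v ∈ (Finset.univ : Finset (Fin Q)).erase (symA (by omega) v) :=
  (Finset.exists_mem_eq_sup' (erase_ne hQ (symA (by omega) v)) (deltaVec v)).choose_spec.1

lemma symS_ne (hQ : 2 ≤ Q) (v : Fin Q → ℝ) : symS hQ v ≠ symA (by omega) v :=
  (Finset.mem_erase.1 (symS_mem hQ v)).1

lemma delta_symS (hQ : 2 ≤ Q) (v : Fin Q → ℝ) : deltaVec v (symS hQ v) = N2 hQ v :=
  (Finset.exists_mem_eq_sup' (erase_ne hQ (symA (by omega) v)) (deltaVec v)).choose_spec.2.symm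

lemma N2_nonpos (hQ : 2 ≤ Q) (v : Fin Q → ℝ) : N2 hQ v ≤ 0 := by
  refine Finset.sup'_le _ _ fun b hb => ?_
  exact delta_nonpos hQ v (Finset.mem_erase.1 hb).1

lemma N2_ge (hQ : 2 ≤ Q) (v : Fin Q → ℝ) : -Mraw v ≤ N2 hQ v := by
  set a := symA (by omega : 0 < Q) v with ha
  obtain ⟨l₀, hl₀, hl₀s⟩ := Finset.exists_mem_eq_sup' (erase_ne hQ a) v
  have hl₀a : l₀ ≠ a := (Finset.mem_erase.1 hl₀).1
  have hva : maxOther v a ≤ v a := by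
    have := Mraw_nonneg hQ v
    rw [← delta_symA (by omega : 0 < Q) v] at this
    simp only [deltaVec] at this; linarith
  -- maxOther v l₀ = v a
  have h1 : maxOther v l₀ = v a := by
    refine le_antisymm (maxOther_le hQ v fun l hl => ?_) (le_maxOther hQ v hl₀a.symm)
    rcases eq_or_ne l a with rfl | hla
    · exact le_refl _
    · exact (le_maxOther hQ v hla).trans hva
  have h2 : v l₀ = maxOther v a := by
    rw [maxOther_eq hQ, hl₀s]
  have h3 : deltaVec v l₀ = -Mraw v := by
    have h4 : Mraw v = (v a - maxOther v a) / 2 := by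
      rw [← delta_symA (by omega : 0 < Q) v]; rfl
    simp only [deltaVec, h1, h2, h4]; ring
  calc -Mraw v = deltaVec v l₀ := h3.symm
    _ ≤ N2 hQ v := Finset.le_sup' _ hl₀



lemma N2_def (hQ : 2 ≤ Q) (v : Fin Q → ℝ) :
    -Mraw v ≤ deltaVec v (symS hQ v) ∧ deltaVec v (symS hQ v) ≤ 0 := by
  rw [delta_symS]
  exact ⟨N2_ge hQ v, N2_nonpos hQ v⟩

/-- truncated margin `M = min(M_raw, γ)`. -/
noncomputable def Mt (γ : ℝ) (v : Fin Q → ℝ) : ℝ := min (Mraw v) γ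

lemma Mt_nonneg (hQ : 2 ≤ Q) {γ : ℝ} (hγ : 0 < γ) (v : Fin Q → ℝ) : 0 ≤ Mt γ v :=
  le_min (Mraw_nonneg hQ v) hγ.le

lemma Mt_le_gamma {γ : ℝ} (v : Fin Q → ℝ) : Mt γ v ≤ γ := min_le_right _ _

lemma u_symA (hQ : 2 ≤ Q) {γ : ℝ} (hγ : 0 < γ) (v : Fin Q → ℝ) :
    trunc γ (deltaVec v) (symA (by omega) v) = Mt γ v := by
  simp only [trunc, delta_symA]
  rcases eq_or_lt_of_le (Mraw_nonneg hQ v) with h | h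
  · rw [← h, Real.sign_zero, Mt, ← h]
    simp [le_of_lt hγ]
  · rw [Real.sign_of_pos h, abs_of_pos h, one_mul, Mt]

lemma u_symS_ge (hQ : 2 ≤ Q) {γ : ℝ} (hγ : 0 < γ) (v : Fin Q → ℝ) :
    -(Mt γ v) ≤ trunc γ (deltaVec v) (symS hQ v) := by
  obtain ⟨h1, h2⟩ := N2_def hQ v
  simp only [trunc]
  rcases eq_or_lt_of_le h2 with h | h
  · rw [h, Real.sign_zero, zero_mul]
    simpa using Mt_nonneg hQ hγ v
  · rw [Real.sign_of_neg h, abs_of_neg h, neg_one_mul, neg_le_neg_iff, Mt]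
    exact min_le_min (by linarith) (le_refl γ)

lemma fstar_symA (hQ : 2 ≤ Q) {γ : ℝ} (hγ : 0 < γ) (v : Fin Q → ℝ) :
    trunc γ (deltaStarVec v) (symA (by omega) v) = Mt γ v := by
  simp only [trunc, deltaStar_eq]
  rcases eq_or_lt_of_le (Mraw_nonneg hQ v) with h | h
  · rw [← h, mul_zero, Real.sign_zero, Mt, ← h]
    simp [le_of_lt hγ]
  · have hs : deltaVec v (symA (by omega : 0 < Q) v) = Mraw v := delta_symA _ v
    rw [hs, Real.sign_of_pos h, one_mul, Real.sign_of_pos h, abs_of_pos h, one_mul, Mt]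

lemma fstar_off (hQ : 2 ≤ Q) {γ : ℝ} (hγ : 0 < γ) (v : Fin Q → ℝ) {k : Fin Q}
    (hk : k ≠ symA (by omega) v) :
    trunc γ (deltaStarVec v) k = -(Mt γ v) := by
  simp only [trunc, deltaStar_eq]
  rcases eq_or_lt_of_le (delta_nonpos hQ v hk) with h | h
  · have h0 : Mraw v = 0 := delta_zero_off hQ v hk h
    rw [h, h0, Real.sign_zero, zero_mul, Real.sign_zero, Mt, h0]
    simp [le_of_lt hγ]
  · rw [Real.sign_of_neg h, neg_one_mul]
    rcases eq_or_lt_of_le (Mraw_nonneg hQ v) with h0 | h0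
    · rw [← h0, neg_zero, Real.sign_zero, zero_mul, Mt, ← h0]
      simp [le_of_lt hγ]
    · rw [Real.sign_of_neg (by linarith : -Mraw v < 0), neg_one_mul, abs_neg,
        abs_of_pos h0, Mt]

/-- quantization level. -/
noncomputable def symJ (γ : ℝ) (v : Fin Q → ℝ) : ℕ := ⌊Mt γ v / (γ / 8)⌋₊

lemma symJ_le8 (hQ : 2 ≤ Q) {γ : ℝ} (hγ : 0 < γ) (v : Fin Q → ℝ) : symJ γ v ≤ 8 := by
  have h1 : Mt γ v / (γ / 8) ≤ 8 := by
    rw [div_le_iff₀ (by linarith)]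
    have := Mt_le_gamma (γ := γ) v; linarith
  calc symJ γ v ≤ ⌊(8:ℝ)⌋₊ := Nat.floor_le_floor h1
    _ = 8 := by norm_num

lemma symJ_mul_le (hQ : 2 ≤ Q) {γ : ℝ} (hγ : 0 < γ) (v : Fin Q → ℝ) :
    (symJ γ v : ℝ) * (γ / 8) ≤ Mt γ v := by
  have h1 : (symJ γ v : ℝ) ≤ Mt γ v / (γ / 8) :=
    Nat.floor_le (div_nonneg (Mt_nonneg hQ hγ v) (by linarith))
  rw [← le_div_iff₀ (by linarith : (0:ℝ) < γ / 8)]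
  exact h1

lemma lt_symJ_succ {γ : ℝ} (hγ : 0 < γ) (v : Fin Q → ℝ) :
    Mt γ v < ((symJ γ v : ℝ) + 1) * (γ / 8) := by
  have h1 : Mt γ v / (γ / 8) < (symJ γ v : ℝ) + 1 := by
    have := Nat.lt_floor_add_one (Mt γ v / (γ / 8))
    exact_mod_cast this
  calc Mt γ v = Mt γ v / (γ / 8) * (γ / 8) := by field_simp
    _ < ((symJ γ v : ℝ) + 1) * (γ / 8) := by
        exact mul_lt_mul_of_pos_right h1 (by linarith)

lemma symJ_ge1 (hQ : 2 ≤ Q) {γ : ℝ} (hγ : 0 < γ) (v : Fin Q → ℝ) (h : 1 ≤ symJ γ v) :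
    γ / 8 ≤ Mt γ v := by
  have := symJ_mul_le hQ hγ v
  have h2 : (1:ℝ) ≤ (symJ γ v : ℝ) := by exact_mod_cast h
  nlinarith

lemma symJ_eq0 {γ : ℝ} (hγ : 0 < γ) (v : Fin Q → ℝ) (h : symJ γ v = 0) :
    Mt γ v < γ / 8 := by
  have := lt_symJ_succ hγ v
  rw [h] at this; norm_num at this; linarith

/-- the symbol of an output vector. -/
noncomputable def Sym (hQ : 2 ≤ Q) (γ : ℝ) (v : Fin Q → ℝ) : Fin Q × Fin Q × ℕ :=
  (symA (by omega) v, symS hQ v, symJ γ v)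

/-- strong distinctness of symbols. -/
def SD (σ σ' : Fin Q × Fin Q × ℕ) : Prop :=
  (σ.1 ≠ σ'.1 ∧ (1 ≤ σ.2.2 ∨ 1 ≤ σ'.2.2)) ∨
  (σ.1 = σ'.1 ∧ (σ.2.2 + 2 ≤ σ'.2.2 ∨ σ'.2.2 + 2 ≤ σ.2.2))

lemma SD_symm {σ σ' : Fin Q × Fin Q × ℕ} (h : SD σ σ') : SD σ' σ := by
  rcases h with ⟨h1, h2⟩ | ⟨h1, h2⟩
  · exact Or.inl ⟨h1.symm, h2.symm⟩
  · exact Or.inr ⟨h1.symm, h2.symm⟩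

/-- key distance estimate: symbols not strongly distinct ⟹ `Δ*`-values are `< γ/4` close. -/
lemma dist_lt (hQ : 2 ≤ Q) {γ : ℝ} (hγ : 0 < γ) (v v' : Fin Q → ℝ)
    (h : ¬ SD (Sym hQ γ v) (Sym hQ γ v')) (k : Fin Q) :
    |trunc γ (deltaStarVec v) k - trunc γ (deltaStarVec v') k| < γ / 4 := by
  rw [SD] at h
  push_neg at h
  simp only [Sym] at h
  obtain ⟨h1, h2⟩ := h
  have hM := Mt_nonneg hQ hγ v
  have hM' := Mt_nonneg hQ hγ v'
  rcases eq_or_ne (symA (by omega : 0 < Q) v) (symA (by omega : 0 < Q) v') with hA | hA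
  · -- same argmax : levels within 1
    obtain ⟨hj1, hj2⟩ := h2 hA
    have hMM' : |Mt γ v - Mt γ v'| < 2 * (γ / 8) := by
      rw [abs_lt]
      constructor
      · have b1 := symJ_mul_le hQ hγ v
        have b2 := lt_symJ_succ hγ v'
        have c1 : (symJ γ v' : ℝ) ≤ (symJ γ v : ℝ) + 1 := by
          exact_mod_cast (by omega : symJ γ v' ≤ symJ γ v + 1)
        nlinarith [mul_le_mul_of_nonneg_right c1 (le_of_lt (show (0:ℝ) < γ/8 by linarith))]
      · have b1 := symJ_mul_le hQ hγ v'
        have b2 := lt_symJ_succ hγ v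
        have c1 : (symJ γ v : ℝ) ≤ (symJ γ v' : ℝ) + 1 := by
          exact_mod_cast (by omega : symJ γ v ≤ symJ γ v' + 1)
        nlinarith [mul_le_mul_of_nonneg_right c1 (le_of_lt (show (0:ℝ) < γ/8 by linarith))]
    rcases eq_or_ne k (symA (by omega : 0 < Q) v) with hk | hk
    · have e1 : trunc γ (deltaStarVec v) k = Mt γ v := by
        rw [hk]; exact fstar_symA hQ hγ v
      have e2 : trunc γ (deltaStarVec v') k = Mt γ v' := by
        rw [hk, hA]; exact fstar_symA hQ hγ v'
      rw [e1, e2]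
      linarith [hMM', abs_nonneg (Mt γ v - Mt γ v')]
    · have hk' : k ≠ symA (by omega : 0 < Q) v' := by rw [← hA]; exact hk
      rw [fstar_off hQ hγ v hk, fstar_off hQ hγ v' hk']
      have : |-(Mt γ v) - -(Mt γ v')| = |Mt γ v - Mt γ v'| := by
        rw [← abs_neg]; ring_nf
      rw [this]; linarith
  · -- distinct argmax : both levels 0
    obtain ⟨hj1, hj2⟩ : symJ γ v = 0 ∧ symJ γ v' = 0 := by
      have := h1 hA; omega
    have b1 := symJ_eq0 hγ v hj1
    have b2 := symJ_eq0 hγ v' hj2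
    have e1 : |trunc γ (deltaStarVec v) k| ≤ Mt γ v := by
      rcases eq_or_ne k (symA (by omega : 0 < Q) v) with hk | hk
      · rw [hk, fstar_symA hQ hγ v, abs_of_nonneg hM]
      · rw [fstar_off hQ hγ v hk, abs_neg, abs_of_nonneg hM]
    have e2 : |trunc γ (deltaStarVec v') k| ≤ Mt γ v' := by
      rcases eq_or_ne k (symA (by omega : 0 < Q) v') with hk | hk
      · rw [hk, fstar_symA hQ hγ v', abs_of_nonneg hM']
      · rw [fstar_off hQ hγ v' hk, abs_neg, abs_of_nonneg hM']
    calc |trunc γ (deltaStarVec v) k - trunc γ (deltaStarVec v') k|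
        ≤ |trunc γ (deltaStarVec v) k| + |trunc γ (deltaStarVec v') k| := abs_sub _ _
      _ < γ / 4 := by linarith


/-- witness alphabet. -/
abbrev Om (Q : ℕ) := Fin 9 × Fin Q × Fin Q

def jval (t : Fin 9) : ℕ := max 1 (t : ℕ)

/-- "high side" condition on symbols. -/
def Chi (ω : Om Q) (σ : Fin Q × Fin Q × ℕ) : Prop :=
  σ.1 = ω.2.1 ∧ jval ω.1 ≤ σ.2.2

/-- "low side" condition on symbols. -/
def Clo (ω : Om Q) (σ : Fin Q × Fin Q × ℕ) : Prop :=
  ((ω.1 : ℕ) = 0 ∧ σ.1 = ω.2.2 ∧ 1 ≤ σ.2.2 ∧ ω.2.2 < ω.2.1) ∨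
  ((ω.1 : ℕ) = 1 ∧ σ.1 = ω.2.2 ∧ σ.2.2 = 0) ∨
  (2 ≤ (ω.1 : ℕ) ∧ σ.1 = ω.2.1 ∧ σ.2.1 = ω.2.2 ∧ σ.2.2 + 2 ≤ (ω.1 : ℕ))

/-- the crucial "order" property: the 2×2 compatibility pattern is impossible. -/
lemma fourPrime (ω ω'' : Om Q) (σ₁ σ₂ : Fin Q × Fin Q × ℕ)
    (h1 : Chi ω σ₁) (h2 : Clo ω'' σ₁) (h3 : Clo ω σ₂) (h4 : Chi ω'' σ₂) : False := by
  obtain ⟨t, i₁, i₂⟩ := ω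
  obtain ⟨t'', i₁'', i₂''⟩ := ω''
  obtain ⟨ha1, hl1⟩ := h1
  obtain ⟨ha2, hl2⟩ := h4
  simp only [Clo] at h2 h3
  simp only [jval] at hl1 hl2
  dsimp only at ha1 ha2 h2 h3 hl1 hl2
  rcases h2 with ⟨e0, e1, e2, e3⟩ | ⟨e0, e1, e2⟩ | ⟨e0, e1, e2, e3⟩
  · -- t'' = 0
    have g1 : i₁ = i₂'' := by rw [← ha1]; exact e1
    rcases h3 with ⟨f0, f1, f2, f3⟩ | ⟨f0, f1, f2⟩ | ⟨f0, f1, f2, f3⟩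
    · have g2 : i₁'' = i₂ := by rw [← ha2]; exact f1
      rw [← g1, g2] at e3
      exact absurd (e3.trans f3) (lt_irrefl _)
    · omega
    · have g2 : i₁'' = i₁ := by rw [← ha2]; exact f1
      rw [g2, g1] at e3
      exact absurd e3 (lt_irrefl _)
  · omega
  · -- t'' ≥ 2
    have g1 : i₁ = i₁'' := by rw [← ha1]; exact e1
    rcases h3 with ⟨f0, f1, f2, f3⟩ | ⟨f0, f1, f2⟩ | ⟨f0, f1, f2, f3⟩
    · have g2 : i₁'' = i₂ := by rw [← ha2]; exact f1
      rw [← g2, ← g1] at f3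
      exact absurd f3 (lt_irrefl _)
    · omega
    · omega


lemma SD_orient (σ σ' : Fin Q × Fin Q × ℕ)
    (hs : σ.2.1 ≠ σ.1) (hs' : σ'.2.1 ≠ σ'.1) (h8 : σ.2.2 ≤ 8) (h8' : σ'.2.2 ≤ 8)
    (h : SD σ σ') :
    ∃ ω : Om Q, ω.2.1 ≠ ω.2.2 ∧ ((Chi ω σ ∧ Clo ω σ') ∨ (Chi ω σ' ∧ Clo ω σ)) := by
  obtain ⟨a, sc, j⟩ := σ
  obtain ⟨a', sc', j'⟩ := σ'
  dsimp only at hs hs' h8 h8' ⊢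
  rcases h with ⟨hne, hlev⟩ | ⟨heq, hgap⟩
  · dsimp only at hne hlev
    by_cases hj : 1 ≤ j
    · by_cases hj' : 1 ≤ j'
      · rcases lt_trichotomy a a' with hlt | heq | hlt
        · refine ⟨(⟨0, by omega⟩, a', a), Ne.symm hne, Or.inr ⟨⟨rfl, ?_⟩, Or.inl ⟨rfl, rfl, hj, hlt⟩⟩⟩
          simpa [jval] using hj'
        · exact absurd heq hne
        · refine ⟨(⟨0, by omega⟩, a, a'), hne, Or.inl ⟨⟨rfl, ?_⟩, Or.inl ⟨rfl, rfl, hj', hlt⟩⟩⟩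
          simpa [jval] using hj
      · refine ⟨(⟨1, by omega⟩, a, a'), hne, Or.inl ⟨⟨rfl, ?_⟩, Or.inr (Or.inl ⟨rfl, rfl, by dsimp only; omega⟩)⟩⟩
        simpa [jval] using hj
    · have hj' : 1 ≤ j' := by omega
      refine ⟨(⟨1, by omega⟩, a', a), Ne.symm hne, Or.inr ⟨⟨rfl, ?_⟩, Or.inr (Or.inl ⟨rfl, rfl, by dsimp only; omega⟩)⟩⟩
      simpa [jval] using hj'
  · dsimp only at heq hgap
    subst heq
    rcases hgap with hgap | hgap
    · -- j + 2 ≤ j' : σ' is high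
      refine ⟨(⟨j', by omega⟩, a, sc), fun hh => hs (hh.symm), Or.inr ⟨⟨rfl, ?_⟩, Or.inr (Or.inr ⟨by simpa using (by omega : 2 ≤ j'), rfl, rfl, by simpa using hgap⟩)⟩⟩
      simp only [jval]
      omega
    · -- j' + 2 ≤ j : σ is high
      refine ⟨(⟨j, by omega⟩, a, sc'), fun hh => hs' (hh.symm), Or.inl ⟨⟨rfl, ?_⟩, Or.inr (Or.inr ⟨by simpa using (by omega : 2 ≤ j), rfl, rfl, by simpa using hgap⟩)⟩⟩
      simp only [jval]
      omega

lemma margin_chi (hQ : 2 ≤ Q) {γ : ℝ} (hγ : 0 < γ) (v : Fin Q → ℝ) (ω : Om Q)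
    (h : Chi ω (Sym hQ γ v)) :
    (jval ω.1 : ℝ) * (γ / 8) ≤ trunc γ (deltaVec v) ω.2.1 := by
  obtain ⟨ha, hl⟩ := h
  simp only [Sym] at ha hl
  rw [← ha, u_symA hQ hγ v]
  have h1 := symJ_mul_le hQ hγ v
  have h2 : (jval ω.1 : ℝ) ≤ (symJ γ v : ℝ) := by exact_mod_cast hl
  nlinarith

lemma margin_clo (hQ : 2 ≤ Q) {γ : ℝ} (hγ : 0 < γ) (v : Fin Q → ℝ) (ω : Om Q)
    (h : Clo ω (Sym hQ γ v)) :
    γ / 12 - (jval ω.1 : ℝ) * (γ / 8) ≤ trunc γ (deltaVec v) ω.2.2 := by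
  rcases h with ⟨e0, e1, e2, _⟩ | ⟨e0, e1, e2⟩ | ⟨e0, e1, e2, e3⟩
  · simp only [Sym] at e1 e2
    rw [← e1, u_symA hQ hγ v]
    have h1 := symJ_ge1 hQ hγ v e2
    have h2 : jval ω.1 = 1 := by simp [jval, e0]
    rw [h2]
    push_cast
    linarith
  · simp only [Sym] at e1 e2
    rw [← e1, u_symA hQ hγ v]
    have h1 := Mt_nonneg hQ hγ v
    have h2 : jval ω.1 = 1 := by simp [jval, e0]
    rw [h2]
    push_cast
    linarith
  · simp only [Sym] at e1 e2 e3
    rw [← e2]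
    have h1 := u_symS_ge hQ hγ v
    have h2 := lt_symJ_succ hγ v
    have h3 : jval ω.1 = (ω.1 : ℕ) := by simp [jval]; omega
    rw [h3]
    have h4 : (symJ γ v : ℝ) + 2 ≤ ((ω.1 : ℕ) : ℝ) := by exact_mod_cast e3
    nlinarith


lemma symS_ne' (hQ : 2 ≤ Q) (γ : ℝ) (v : Fin Q → ℝ) :
    (Sym hQ γ v).2.1 ≠ (Sym hQ γ v).1 := symS_ne hQ v

lemma symJ_le8' (hQ : 2 ≤ Q) {γ : ℝ} (hγ : 0 < γ) (v : Fin Q → ℝ) :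
    (Sym hQ γ v).2.2 ≤ 8 := symJ_le8 hQ hγ v

section Comb

variable {β P W : Type*}

open Classical in
/-- abstract shattering of a pattern (a finite set of (point, witness) pairs). -/
def Shat (CHI CLO : P → W → β → Prop) (𝒢 : Finset β) (Pat : Finset (P × W)) : Prop :=
  ∀ S ⊆ Pat.image Prod.fst, ∃ g ∈ 𝒢, ∀ q ∈ Pat,
    (q.1 ∈ S → CHI q.1 q.2 g) ∧ (q.1 ∉ S → CLO q.1 q.2 g)

lemma Shat_mono {CHI CLO : P → W → β → Prop} {𝒢 𝒢' : Finset β} {Pat : Finset (P × W)}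
    (h : 𝒢 ⊆ 𝒢') (hs : Shat CHI CLO 𝒢 Pat) : Shat CHI CLO 𝒢' Pat := by
  intro S hS
  obtain ⟨g, hg, hgc⟩ := hs S hS
  exact ⟨g, h hg, hgc⟩

open Classical in
lemma exists_pairing [DecidableEq β] :
    ∀ (n : ℕ) (F : Finset β), F.card = n →
    ∃ pr : Finset (β × β), pr.card = F.card / 2 ∧
      (∀ p ∈ pr, p.1 ∈ F ∧ p.2 ∈ F ∧ p.1 ≠ p.2) ∧
      (∀ p ∈ pr, ∀ q ∈ pr, p ≠ q → p.1 ≠ q.1 ∧ p.1 ≠ q.2 ∧ p.2 ≠ q.1 ∧ p.2 ≠ q.2) := by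
  intro n
  induction n using Nat.strong_induction_on with
  | _ n IH =>
    intro F hF
    by_cases h2 : F.card ≤ 1
    · refine ⟨∅, ?_, by simp, by simp⟩
      simp only [Finset.card_empty]
      omega
    · push_neg at h2
      obtain ⟨x, hx, y, hy, hxy⟩ := Finset.one_lt_card.1 h2
      set F' := (F.erase x).erase y with hF'
      have hxF' : x ∉ F' := fun h => (Finset.mem_erase.1 (Finset.mem_erase.1 h).2).1 rfl
      have hyF' : y ∉ F' := fun h => (Finset.mem_erase.1 h).1 rfl
      have hsub : F' ⊆ F := Finset.Subset.trans (Finset.erase_subset _ _) (Finset.erase_subset _ _)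
      have hyx : y ∈ F.erase x := Finset.mem_erase.2 ⟨fun h => hxy h.symm, hy⟩
      have hcard : F'.card = F.card - 2 := by
        rw [hF', Finset.card_erase_of_mem hyx, Finset.card_erase_of_mem hx]
        omega
      obtain ⟨pr', h1, h2', h3⟩ := IH F'.card (by omega) F' rfl
      refine ⟨insert (x, y) pr', ?_, ?_, ?_⟩
      · have hnotmem : (x, y) ∉ pr' := fun h => hxF' (h2' _ h).1
        rw [Finset.card_insert_of_notMem hnotmem, h1, hcard]
        omega
      · intro p hp
        rcases Finset.mem_insert.1 hp with rfl | hp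
        · exact ⟨hx, hy, hxy⟩
        · exact ⟨hsub (h2' _ hp).1, hsub (h2' _ hp).2.1, (h2' _ hp).2.2⟩
      · intro p hp q hq hpq
        rcases Finset.mem_insert.1 hp with rfl | hp <;> rcases Finset.mem_insert.1 hq with rfl | hq
        · exact absurd rfl hpq
        · have q1 : q.1 ∈ F' := (h2' _ hq).1
          have q2 : q.2 ∈ F' := (h2' _ hq).2.1
          exact ⟨fun h => hxF' (by rw [show x = q.1 from h]; exact q1),
                 fun h => hxF' (by rw [show x = q.2 from h]; exact q2),
                 fun h => hyF' (by rw [show y = q.1 from h]; exact q1),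
                 fun h => hyF' (by rw [show y = q.2 from h]; exact q2)⟩
        · have q1 : p.1 ∈ F' := (h2' _ hp).1
          have q2 : p.2 ∈ F' := (h2' _ hp).2.1
          exact ⟨fun h => hxF' (by rw [← show p.1 = x from h]; exact q1),
                 fun h => hyF' (by rw [← show p.1 = y from h]; exact q1),
                 fun h => hxF' (by rw [← show p.2 = x from h]; exact q2),
                 fun h => hyF' (by rw [← show p.2 = y from h]; exact q2)⟩
        · exact h3 _ hp _ hq hpq

open Classical in
/-- the core combinatorial induction (abstract ABDCBH-style lemma). -/
lemma core_claim (CHI CLO : P → W → β → Prop) (Lab : Finset (P × W))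
    (hL : 0 < Lab.card)
    (hfour : ∀ (x : P) (ω ω'' : W) (g g' : β),
      CHI x ω g → CLO x ω'' g → CLO x ω g' → CHI x ω'' g' → False) :
    ∀ (k : ℕ) (𝒢 : Finset β),
    (∀ g ∈ 𝒢, ∀ g' ∈ 𝒢, g ≠ g' → ∃ q ∈ Lab,
        (CHI q.1 q.2 g ∧ CLO q.1 q.2 g') ∨ (CHI q.1 q.2 g' ∧ CLO q.1 q.2 g)) →
    2 * (2 * Lab.card) ^ k ≤ 𝒢.card →
    ∃ SP : Finset (Finset (P × W)),
      (∀ Pat ∈ SP, Shat CHI CLO 𝒢 Pat ∧ Pat ⊆ Lab ∧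
        (∀ q ∈ Pat, ∀ q' ∈ Pat, q.1 = q'.1 → q = q')) ∧ 2 ^ k ≤ SP.card := by
  intro k
  induction k with
  | zero =>
    intro 𝒢 hpair hcard
    have hcard' : 2 ≤ 𝒢.card := by simpa using hcard
    have hne : 𝒢.Nonempty := Finset.card_pos.1 (by omega)
    refine ⟨{∅}, ?_, by simp⟩
    intro Pat hPat
    rw [Finset.mem_singleton] at hPat
    subst hPat
    refine ⟨?_, by simp, by simp⟩
    intro S hS
    obtain ⟨g, hg⟩ := hne
    exact ⟨g, hg, by simp⟩
  | succ k IHk =>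
    intro 𝒢 hpair hcard
    -- pairing
    obtain ⟨pr, hprcard, hprmem, hprdisj⟩ := exists_pairing 𝒢.card 𝒢 rfl
    -- labels via choice
    have hE : ∀ p : β × β, ∃ q, p ∈ pr → (q ∈ Lab ∧
        ((CHI q.1 q.2 p.1 ∧ CLO q.1 q.2 p.2) ∨ (CHI q.1 q.2 p.2 ∧ CLO q.1 q.2 p.1))) := by
      intro p
      by_cases hp : p ∈ pr
      · obtain ⟨h1, h2, h3⟩ := hprmem p hp
        obtain ⟨q, hq1, hq2⟩ := hpair p.1 h1 p.2 h2 h3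
        exact ⟨q, fun _ => ⟨hq1, hq2⟩⟩
      · exact ⟨(Finset.card_pos.1 hL).choose, fun h => absurd h hp⟩
    choose f hfspec using hE
    have hf1 : ∀ p ∈ pr, f p ∈ Lab := fun p hp => (hfspec p hp).1
    have hf2 : ∀ p ∈ pr,
        ((CHI (f p).1 (f p).2 p.1 ∧ CLO (f p).1 (f p).2 p.2) ∨
         (CHI (f p).1 (f p).2 p.2 ∧ CLO (f p).1 (f p).2 p.1)) := fun p hp => (hfspec p hp).2
    -- orientation via choice
    have e0' : 0 < (2*Lab.card)^(k+1) := pow_pos (by omega) _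
    have hg0 : β := ((Finset.card_pos.1 (by omega : 0 < 𝒢.card)).choose)
    have hor : ∀ p : β × β, ∃ gh gl : β, p ∈ pr →
        (((gh = p.1 ∧ gl = p.2) ∨ (gh = p.2 ∧ gl = p.1)) ∧
        CHI (f p).1 (f p).2 gh ∧ CLO (f p).1 (f p).2 gl) := by
      intro p
      by_cases hp : p ∈ pr
      · rcases hf2 p hp with ⟨h1, h2⟩ | ⟨h1, h2⟩
        · exact ⟨p.1, p.2, fun _ => ⟨Or.inl ⟨rfl, rfl⟩, h1, h2⟩⟩
        · exact ⟨p.2, p.1, fun _ => ⟨Or.inr ⟨rfl, rfl⟩, h1, h2⟩⟩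
      · exact ⟨hg0, hg0, fun h => absurd h hp⟩
    choose hi lo horspec using hor
    have hor1 : ∀ p ∈ pr, (hi p = p.1 ∧ lo p = p.2) ∨ (hi p = p.2 ∧ lo p = p.1) :=
      fun p hp => (horspec p hp).1
    have hor2 : ∀ p ∈ pr, CHI (f p).1 (f p).2 (hi p) := fun p hp => (horspec p hp).2.1
    have hor3 : ∀ p ∈ pr, CLO (f p).1 (f p).2 (lo p) := fun p hp => (horspec p hp).2.2
    -- pigeonhole
    have hprlow : (2 * Lab.card) ^ (k + 1) ≤ pr.card := by
      rw [hprcard]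
      rw [Nat.le_div_iff_mul_le (by omega : 0 < 2)]
      calc (2 * Lab.card) ^ (k+1) * 2 = 2 * (2*Lab.card)^(k+1) := by ring
        _ ≤ 𝒢.card := hcard
    have hpig : ∃ l ∈ Lab, 2 * (2*Lab.card)^k - 1 < (pr.filter (fun p => f p = l)).card := by
      apply Finset.exists_lt_card_fiber_of_mul_lt_card_of_maps_to hf1
      have e2 : 0 < (2*Lab.card)^k := pow_pos (by omega) _
      have e1 : Lab.card * (2 * (2*Lab.card)^k - 1) < (2*Lab.card)^(k+1) := by
        have step : Lab.card * (2 * (2*Lab.card)^k - 1) < Lab.card * (2 * (2*Lab.card)^k) :=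
          mul_lt_mul_of_pos_left (by omega) hL
        have heq : (2*Lab.card)^(k+1) = Lab.card * (2 * (2*Lab.card)^k) := by ring
        omega
      exact lt_of_lt_of_le e1 hprlow
    obtain ⟨l, hlLab, hfib⟩ := hpig
    set fib := pr.filter (fun p => f p = l) with hfibdef
    have hfibc : 2 * (2*Lab.card)^k ≤ fib.card := by
      have : 0 < (2*Lab.card)^k := pow_pos (by omega) _
      omega
    have hfibpr : fib ⊆ pr := Finset.filter_subset _ _
    -- the two subfamilies
    set Hs := fib.image hi with hHdef
    set Ls := fib.image lo with hLdef
    have hhi_mem : ∀ p ∈ fib, hi p = p.1 ∨ hi p = p.2 := by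
      intro p hp
      rcases hor1 p (hfibpr hp) with ⟨h, _⟩ | ⟨h, _⟩
      · exact Or.inl h
      · exact Or.inr h
    have hlo_mem : ∀ p ∈ fib, lo p = p.1 ∨ lo p = p.2 := by
      intro p hp
      rcases hor1 p (hfibpr hp) with ⟨_, h⟩ | ⟨_, h⟩
      · exact Or.inr h
      · exact Or.inl h
    have hinj : ∀ (u : (β×β) → β), (∀ p ∈ fib, u p = p.1 ∨ u p = p.2) →
        Set.InjOn u fib := by
      intro u hu p hp q hq hpq
      by_contra hne
      have := hprdisj p (hfibpr hp) q (hfibpr hq) hne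
      rcases hu p hp with h1 | h1 <;> rcases hu q hq with h2 | h2 <;>
        rw [h1, h2] at hpq <;> tauto
    have hHcard : 2 * (2*Lab.card)^k ≤ Hs.card := by
      rw [hHdef, Finset.card_image_of_injOn (hinj hi hhi_mem)]; exact hfibc
    have hLcard : 2 * (2*Lab.card)^k ≤ Ls.card := by
      rw [hLdef, Finset.card_image_of_injOn (hinj lo hlo_mem)]; exact hfibc
    have hHsub : Hs ⊆ 𝒢 := by
      intro g hg
      obtain ⟨p, hp, rfl⟩ := Finset.mem_image.1 hg
      rcases hhi_mem p hp with h | h <;> rw [h]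
      · exact (hprmem p (hfibpr hp)).1
      · exact (hprmem p (hfibpr hp)).2.1
    have hLsub : Ls ⊆ 𝒢 := by
      intro g hg
      obtain ⟨p, hp, rfl⟩ := Finset.mem_image.1 hg
      rcases hlo_mem p hp with h | h <;> rw [h]
      · exact (hprmem p (hfibpr hp)).1
      · exact (hprmem p (hfibpr hp)).2.1
    have hHprop : ∀ g ∈ Hs, CHI l.1 l.2 g := by
      intro g hg
      obtain ⟨p, hp, rfl⟩ := Finset.mem_image.1 hg
      have := hor2 p (hfibpr hp)
      rwa [(Finset.mem_filter.1 hp).2] at this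
    have hLprop : ∀ g ∈ Ls, CLO l.1 l.2 g := by
      intro g hg
      obtain ⟨p, hp, rfl⟩ := Finset.mem_image.1 hg
      have := hor3 p (hfibpr hp)
      rwa [(Finset.mem_filter.1 hp).2] at this
    have hpairH : ∀ g ∈ Hs, ∀ g' ∈ Hs, g ≠ g' → ∃ q ∈ Lab,
        (CHI q.1 q.2 g ∧ CLO q.1 q.2 g') ∨ (CHI q.1 q.2 g' ∧ CLO q.1 q.2 g) :=
      fun g hg g' hg' => hpair g (hHsub hg) g' (hHsub hg')
    have hpairL : ∀ g ∈ Ls, ∀ g' ∈ Ls, g ≠ g' → ∃ q ∈ Lab,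
        (CHI q.1 q.2 g ∧ CLO q.1 q.2 g') ∨ (CHI q.1 q.2 g' ∧ CLO q.1 q.2 g) :=
      fun g hg g' hg' => hpair g (hLsub hg) g' (hLsub hg')
    obtain ⟨SPH, hSPH, hSPHcard⟩ := IHk Hs hpairH hHcard
    obtain ⟨SPL, hSPL, hSPLcard⟩ := IHk Ls hpairL hLcard
    -- no pattern in both families mentions the point l.1
    have hnox : ∀ Pat ∈ SPH ∩ SPL, ∀ ω'', (l.1, ω'') ∉ Pat := by
      intro Pat hPat ω'' hmem
      have hPatH := hSPH Pat (Finset.mem_of_mem_inter_left hPat)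
      have hPatL := hSPL Pat (Finset.mem_of_mem_inter_right hPat)
      have hx_img : l.1 ∈ Pat.image Prod.fst := Finset.mem_image.2 ⟨(l.1, ω''), hmem, rfl⟩
      obtain ⟨g, hgH, hgc⟩ := hPatH.1 ((Pat.image Prod.fst).erase l.1) (Finset.erase_subset _ _)
      obtain ⟨g', hgL, hgc'⟩ := hPatL.1 (Pat.image Prod.fst) (Finset.Subset.refl _)
      have c1 : CLO l.1 ω'' g := (hgc _ hmem).2 (fun h => (Finset.mem_erase.1 h).1 rfl)
      have c2 : CHI l.1 ω'' g' := (hgc' _ hmem).1 hx_img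
      exact hfour l.1 l.2 ω'' g g' (hHprop g hgH) c1 (hLprop g' hgL) c2
    have hlnot : ∀ Pat ∈ SPH ∩ SPL, l ∉ Pat := fun Pat hPat h => hnox Pat hPat l.2 h
    -- extension patterns
    set NEW := (SPH ∩ SPL).image (insert l) with hNEWdef
    have hshatnew : ∀ Pat ∈ SPH ∩ SPL, Shat CHI CLO 𝒢 (insert l Pat) := by
      intro Pat hPat
      have hPatH := hSPH Pat (Finset.mem_of_mem_inter_left hPat)
      have hPatL := hSPL Pat (Finset.mem_of_mem_inter_right hPat)
      intro S hS
      have himg : (insert l Pat).image Prod.fst = insert l.1 (Pat.image Prod.fst) := by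
        rw [Finset.image_insert]
      rw [himg] at hS
      by_cases hxS : l.1 ∈ S
      · obtain ⟨g, hgH, hgc⟩ := hPatH.1 (S.erase l.1) (by
          intro y hy
          have hy1 := Finset.mem_erase.1 hy
          rcases Finset.mem_insert.1 (hS hy1.2) with h | h
          · exact absurd h hy1.1
          · exact h)
        refine ⟨g, hHsub hgH, ?_⟩
        intro q hq
        rcases Finset.mem_insert.1 hq with rfl | hq
        · exact ⟨fun _ => hHprop g hgH, fun h => absurd hxS h⟩
        · have hq1 : q.1 ≠ l.1 := fun h => hnox Pat hPat q.2 (by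
            have : q = (l.1, q.2) := Prod.ext h rfl
            rwa [← this])
          refine ⟨fun h => (hgc q hq).1 (Finset.mem_erase.2 ⟨hq1, h⟩), fun h => (hgc q hq).2 ?_⟩
          exact fun hc => h (Finset.mem_of_mem_erase hc)
      · obtain ⟨g', hgL, hgc'⟩ := hPatL.1 S (by
          intro y hy
          rcases Finset.mem_insert.1 (hS hy) with h | h
          · exact absurd (h ▸ hy) hxS
          · exact h)
        refine ⟨g', hLsub hgL, ?_⟩
        intro q hq
        rcases Finset.mem_insert.1 hq with rfl | hq
        · exact ⟨fun h => absurd h hxS, fun _ => hLprop g' hgL⟩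
        · exact hgc' q hq
    -- NEW is disjoint from SPH ∪ SPL
    have hdisj : Disjoint (SPH ∪ SPL) NEW := by
      rw [Finset.disjoint_right]
      intro Pat' hPat' hmem
      obtain ⟨Pat, hPat, rfl⟩ := Finset.mem_image.1 hPat'
      have hlmem : l ∈ insert l Pat := Finset.mem_insert_self _ _
      have hximg : l.1 ∈ (insert l Pat).image Prod.fst :=
        Finset.mem_image.2 ⟨l, hlmem, rfl⟩
      rcases Finset.mem_union.1 hmem with hmem' | hmem'
      · obtain ⟨g, hgH, hgc⟩ := (hSPH _ hmem').1 (((insert l Pat).image Prod.fst).erase l.1)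
          (Finset.erase_subset _ _)
        have c1 : CLO l.1 l.2 g := (hgc _ hlmem).2 (fun h => (Finset.mem_erase.1 h).1 rfl)
        exact hfour l.1 l.2 l.2 g g (hHprop g hgH) c1 c1 (hHprop g hgH)
      · obtain ⟨g', hgL, hgc'⟩ := (hSPL _ hmem').1 ((insert l Pat).image Prod.fst)
          (Finset.Subset.refl _)
        have c2 : CHI l.1 l.2 g' := (hgc' _ hlmem).1 hximg
        exact hfour l.1 l.2 l.2 g' g' c2 (hLprop g' hgL) (hLprop g' hgL) c2
    have hinjins : Set.InjOn (insert l) ((SPH ∩ SPL : Finset (Finset (P × W))) : Set (Finset (P × W))) := by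
      intro P1 hP1 P2 hP2 he
      have h1 : l ∉ P1 := hlnot _ (by exact_mod_cast hP1)
      have h2 : l ∉ P2 := hlnot _ (by exact_mod_cast hP2)
      rw [← Finset.erase_insert h1, ← Finset.erase_insert h2, he]
    refine ⟨(SPH ∪ SPL) ∪ NEW, ?_, ?_⟩
    · intro Pat hPat
      rcases Finset.mem_union.1 hPat with h | h
      · rcases Finset.mem_union.1 h with h' | h'
        · obtain ⟨hs, hsub, hfun⟩ := hSPH Pat h'
          exact ⟨Shat_mono hHsub hs, hsub, hfun⟩
        · obtain ⟨hs, hsub, hfun⟩ := hSPL Pat h'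
          exact ⟨Shat_mono hLsub hs, hsub, hfun⟩
      · obtain ⟨Pat', hPat', rfl⟩ := Finset.mem_image.1 h
        refine ⟨hshatnew Pat' hPat', ?_, ?_⟩
        · intro q hq
          rcases Finset.mem_insert.1 hq with rfl | hq
          · exact hlLab
          · exact ((hSPH Pat' (Finset.mem_of_mem_inter_left hPat')).2.1) hq
        · intro q hq q' hq' hqq
          rcases Finset.mem_insert.1 hq with hq0 | hq
          · rcases Finset.mem_insert.1 hq' with hq0' | hq'
            · rw [hq0, hq0']
            · exfalso
              apply hnox Pat' hPat' q'.2
              have hfst : q'.1 = l.1 := by rw [← hqq, hq0]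
              have he : q' = (l.1, q'.2) := Prod.ext hfst rfl
              rwa [he] at hq'
          · rcases Finset.mem_insert.1 hq' with hq0' | hq'
            · exfalso
              apply hnox Pat' hPat' q.2
              have hfst : q.1 = l.1 := by rw [hqq, hq0']
              have he : q = (l.1, q.2) := Prod.ext hfst rfl
              rwa [he] at hq
            · exact ((hSPH Pat' (Finset.mem_of_mem_inter_left hPat')).2.2) q hq q' hq' hqq
    · have e1 : ((SPH ∪ SPL) ∪ NEW).card = (SPH ∪ SPL).card + NEW.card :=
        Finset.card_union_of_disjoint hdisj
      have e2 : NEW.card = (SPH ∩ SPL).card := Finset.card_image_of_injOn hinjins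
      have e3 : (SPH ∪ SPL).card + (SPH ∩ SPL).card = SPH.card + SPL.card :=
        Finset.card_union_add_card_inter _ _
      calc 2^(k+1) = 2^k + 2^k := by ring
        _ ≤ SPH.card + SPL.card := Nat.add_le_add hSPHcard hSPLcard
        _ = (SPH ∪ SPL).card + (SPH ∩ SPL).card := e3.symm
        _ = ((SPH ∪ SPL) ∪ NEW).card := by rw [e1, e2]

end Comb



lemma SP_count {α : Type*} [DecidableEq α] (SP : Finset (Finset α)) (Lab : Finset α) (d : ℕ)
    (h : ∀ P ∈ SP, P ⊆ Lab ∧ P.card ≤ d) :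
    SP.card ≤ ∑ i ∈ Finset.range (d+1), (Lab.card).choose i := by
  have hsub : SP ⊆ (Finset.range (d+1)).biUnion (fun i => Lab.powersetCard i) := by
    intro P hP
    obtain ⟨h1, h2⟩ := h P hP
    exact Finset.mem_biUnion.2 ⟨P.card, Finset.mem_range.2 (by omega),
      Finset.mem_powersetCard.2 ⟨h1, rfl⟩⟩
  calc SP.card ≤ ((Finset.range (d+1)).biUnion (fun i => Lab.powersetCard i)).card :=
        Finset.card_le_card hsub
    _ ≤ ∑ i ∈ Finset.range (d+1), (Lab.powersetCard i).card := Finset.card_biUnion_le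
    _ = ∑ i ∈ Finset.range (d+1), (Lab.card).choose i := by
        apply Finset.sum_congr rfl
        intro i _
        rw [Finset.card_powersetCard]

lemma sum_choose_le (n dd : ℕ) (h1 : 1 ≤ dd) (h2 : dd ≤ n) :
    ((∑ i ∈ Finset.range (dd+1), n.choose i : ℕ) : ℝ) ≤ (Real.exp 1 * n / dd) ^ dd := by
  have hn : 0 < (n:ℝ) := by
    have : 0 < n := by omega
    exact_mod_cast this
  have hdd : 0 < (dd:ℝ) := by
    have : 0 < dd := h1
    exact_mod_cast this
  set α : ℝ := dd / n with hα
  have hα0 : 0 < α := by positivity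
  have hα1 : α ≤ 1 := by
    rw [hα, div_le_one hn]
    exact_mod_cast h2
  have t1 : ((∑ i ∈ Finset.range (dd+1), n.choose i : ℕ) : ℝ) * α ^ dd ≤
      ∑ i ∈ Finset.range (dd+1), (n.choose i : ℝ) * α ^ i := by
    push_cast
    rw [Finset.sum_mul]
    apply Finset.sum_le_sum
    intro i hi
    have hid : i ≤ dd := by
      have := Finset.mem_range.1 hi; omega
    have : α ^ dd ≤ α ^ i := pow_le_pow_of_le_one hα0.le hα1 hid
    exact mul_le_mul_of_nonneg_left this (Nat.cast_nonneg _)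
  have t2 : ∑ i ∈ Finset.range (dd+1), (n.choose i : ℝ) * α ^ i ≤
      ∑ i ∈ Finset.range (n+1), (n.choose i : ℝ) * α ^ i := by
    apply Finset.sum_le_sum_of_subset_of_nonneg
    · exact Finset.range_subset_range.2 (by omega)
    · intro i _ _
      positivity
  have t3 : ∑ i ∈ Finset.range (n+1), (n.choose i : ℝ) * α ^ i = (1 + α) ^ n := by
    rw [add_comm (1:ℝ) α, add_pow]
    apply Finset.sum_congr rfl
    intro i _
    push_cast
    ring
  have t4 : (1 + α) ^ n ≤ Real.exp 1 ^ dd := by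
    calc (1 + α) ^ n ≤ (Real.exp α) ^ n := by
          apply pow_le_pow_left₀ (by positivity)
          linarith [Real.add_one_le_exp α]
      _ = Real.exp ((n:ℝ) * α) := by rw [← Real.exp_nat_mul]
      _ = Real.exp (dd:ℝ) := by
          congr 1
          rw [hα]
          field_simp
      _ = Real.exp 1 ^ dd := by
          rw [← Real.exp_nat_mul, mul_one]
  have hcomb : ((∑ i ∈ Finset.range (dd+1), n.choose i : ℕ) : ℝ) * α ^ dd ≤ Real.exp 1 ^ dd :=
    le_trans t1 (le_trans t2 (le_trans (le_of_eq t3) t4))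
  have hαpow : 0 < α ^ dd := by positivity
  rw [← le_div_iff₀ hαpow] at hcomb
  refine le_trans hcomb (le_of_eq ?_)
  rw [← div_pow]
  congr 1
  rw [hα]
  field_simp



lemma SD_irrefl {Q : ℕ} (σ : Fin Q × Fin Q × ℕ) : ¬ SD σ σ := by
  rintro (⟨h, -⟩ | ⟨-, h⟩)
  · exact h rfl
  · omega

/-- the numeric parameters. -/
def RnN (m Q : ℕ) : ℕ := 18 * m * (Q * Q - Q)
def YN (m Q d : ℕ) : ℕ := ∑ i ∈ Finset.range (d+1), (RnN m Q).choose i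
def KN (m Q d : ℕ) : ℕ := Nat.log 2 (YN m Q d) + 1
def bndN (m Q d : ℕ) : ℕ := if d = 0 then 1 else 2 * (2 * RnN m Q) ^ (KN m Q d) - 1

section Inst

variable {X : Type*} {Q : ℕ}

open Classical in
/-- the packing bound : any pairwise strongly-distinct family has size at most `bndN`. -/
lemma keybound (hQ : 3 ≤ Q) (G : Set (X → Fin Q → ℝ)) {γ : ℝ} (hγ0 : 0 < γ)
    (m d : ℕ) (hm : 0 < m)
    (hd : NdimMargin (γ / 24) ((fun g : X → Fin Q → ℝ => trunc γ ∘ deltaVec ∘ g) '' G)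
            = (d : ℕ∞))
    (hdm : d ≤ 2 * m) (s : Finset X) (hs : s.card = 2 * m)
    (𝒢 : Finset (X → Fin Q → ℝ)) (hsubG : ↑𝒢 ⊆ G)
    (hpairSD : ∀ g ∈ 𝒢, ∀ g' ∈ 𝒢, g ≠ g' →
      ∃ x ∈ s, SD (Sym (by omega) γ (g x)) (Sym (by omega) γ (g' x))) :
    𝒢.card ≤ bndN m Q d := by
  have hQ2 : 2 ≤ Q := by omega
  set Ωf : Finset (Om Q) :=
    (Finset.univ : Finset (Fin 9)) ×ˢ (Finset.univ : Finset (Fin Q)).offDiag with hΩf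
  have hΩmem : ∀ ω : Om Q, ω ∈ Ωf ↔ ω.2.1 ≠ ω.2.2 := by
    intro ω
    simp [hΩf, Finset.mem_product, Finset.mem_offDiag]
  set Lab : Finset (X × Om Q) := s ×ˢ Ωf with hLab
  have hqq : 3 * Q ≤ Q * Q := Nat.mul_le_mul_right Q hQ
  have hLabcard : Lab.card = RnN m Q := by
    rw [hLab, Finset.card_product, hΩf, Finset.card_product, Finset.offDiag_card]
    rw [Finset.card_univ, Finset.card_univ, Fintype.card_fin, Fintype.card_fin, hs, RnN]
    generalize Q * Q - Q = qq
    ring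
  have hRnpos : 0 < RnN m Q := by
    rw [RnN]
    have h6 : 6 ≤ Q * Q - Q := by omega
    have : 1 ≤ m := hm
    nlinarith
  have hLpos : 0 < Lab.card := by rw [hLabcard]; exact hRnpos
  set CHIf : X → Om Q → (X → Fin Q → ℝ) → Prop :=
    fun x ω g => Chi ω (Sym hQ2 γ (g x)) with hCHIf
  set CLOf : X → Om Q → (X → Fin Q → ℝ) → Prop :=
    fun x ω g => Clo ω (Sym hQ2 γ (g x)) with hCLOf
  have hfour : ∀ (x : X) (ω ω'' : Om Q) (g g' : X → Fin Q → ℝ),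
      CHIf x ω g → CLOf x ω'' g → CLOf x ω g' → CHIf x ω'' g' → False := by
    intro x ω ω'' g g' h1 h2 h3 h4
    exact fourPrime ω ω'' _ _ h1 h2 h3 h4
  have hpair' : ∀ g ∈ 𝒢, ∀ g' ∈ 𝒢, g ≠ g' → ∃ q ∈ Lab,
      (CHIf q.1 q.2 g ∧ CLOf q.1 q.2 g') ∨ (CHIf q.1 q.2 g' ∧ CLOf q.1 q.2 g) := by
    intro g hg g' hg' hne
    obtain ⟨x, hx, hsd⟩ := hpairSD g hg g' hg' hne
    obtain ⟨ω, hω1, hω2⟩ := SD_orient (Sym hQ2 γ (g x)) (Sym hQ2 γ (g' x))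
      (symS_ne' hQ2 γ (g x)) (symS_ne' hQ2 γ (g' x))
      (symJ_le8' hQ2 hγ0 (g x)) (symJ_le8' hQ2 hγ0 (g' x)) hsd
    exact ⟨(x, ω), Finset.mem_product.2 ⟨hx, (hΩmem ω).2 hω1⟩, hω2⟩
  -- any shattered functional pattern has size at most d
  have hcap : ∀ Pat : Finset (X × Om Q), Shat CHIf CLOf 𝒢 Pat → Pat ⊆ Lab →
      (∀ q ∈ Pat, ∀ q' ∈ Pat, q.1 = q'.1 → q = q') → Pat.card ≤ d := by
    intro Pat hshat hsubL hfn
    set A := Pat.image Prod.fst with hA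
    have hwfE : ∀ x ∈ A, ∃ ω, (x, ω) ∈ Pat := by
      intro x hx
      obtain ⟨q, hq, hq1⟩ := Finset.mem_image.1 hx
      exact ⟨q.2, by rw [show (x, q.2) = q from Prod.ext hq1.symm rfl]; exact hq⟩
    set wf : X → Om Q := fun x =>
      if h : ∃ ω, (x, ω) ∈ Pat then h.choose
      else (⟨0, by omega⟩, ⟨0, by omega⟩, ⟨1, by omega⟩) with hwf
    have hwfP : ∀ x ∈ A, (x, wf x) ∈ Pat := by
      intro x hx
      have h := hwfE x hx
      have he : wf x = h.choose := by rw [hwf]; exact dif_pos h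
      rw [he]
      exact h.choose_spec
    have hwΩ : ∀ x ∈ A, (wf x).2.1 ≠ (wf x).2.2 := by
      intro x hx
      have := hsubL (hwfP x hx)
      rw [hLab, Finset.mem_product] at this
      exact (hΩmem _).1 this.2
    have hNS : NShatters (γ / 24)
        ((fun g : X → Fin Q → ℝ => trunc γ ∘ deltaVec ∘ g) '' G) A := by
      refine ⟨fun x => (wf x).2.1, fun x => (wf x).2.2,
        fun x => (jval (wf x).1 : ℝ) * (γ / 8) - γ / 24, hwΩ, ?_⟩
      intro y
      set S := A.filter (fun x => y x = true) with hSdef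
      obtain ⟨g, hg𝒢, hgc⟩ := hshat S (Finset.filter_subset _ _)
      refine ⟨trunc γ ∘ deltaVec ∘ g, ⟨g, hsubG hg𝒢, rfl⟩, ?_⟩
      intro x hx
      constructor
      · intro hy
        have hxS : x ∈ S := Finset.mem_filter.2 ⟨hx, hy⟩
        have hc := (hgc (x, wf x) (hwfP x hx)).1 hxS
        have hmc := margin_chi hQ2 hγ0 (g x) (wf x) hc
        simp only [Function.comp_apply, ge_iff_le]
        linarith
      · intro hy
        have hxS : x ∉ S := by
          rw [hSdef, Finset.mem_filter]
          rintro ⟨-, hc⟩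
          rw [hy] at hc
          exact Bool.false_ne_true hc
        have hc := (hgc (x, wf x) (hwfP x hx)).2 hxS
        have hmc := margin_clo hQ2 hγ0 (g x) (wf x) hc
        simp only [Function.comp_apply, ge_iff_le]
        linarith
    have hcard : (A.card : ℕ∞) ≤ (d : ℕ∞) := by
      rw [← hd, NdimMargin]
      exact le_iSup₂ (f := fun (t : Finset X) (_ : t ∈ {t : Finset X |
        NShatters (γ/24) ((fun g : X → Fin Q → ℝ => trunc γ ∘ deltaVec ∘ g) '' G) t}) =>
        (t.card : ℕ∞)) A hNS
    have hAd : A.card ≤ d := by exact_mod_cast hcard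
    have hinj : Set.InjOn Prod.fst (↑Pat : Set (X × Om Q)) := by
      intro q hq q' hq' h
      exact hfn q hq q' hq' h
    have : A.card = Pat.card := Finset.card_image_of_injOn hinj
    omega
  -- main size bound
  rcases Nat.eq_zero_or_pos d with hd0 | hdpos
  · -- d = 0 : at most one function
    rw [bndN, if_pos hd0]
    by_contra hc
    push_neg at hc
    obtain ⟨g, hg, g', hg', hne⟩ := Finset.one_lt_card.1 hc
    obtain ⟨q, hqLab, hq2⟩ := hpair' g hg g' hg' hne
    have hshat1 : Shat CHIf CLOf 𝒢 {q} := by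
      intro S hS
      by_cases hxS : q.1 ∈ S
      · rcases hq2 with ⟨h1, h2⟩ | ⟨h1, h2⟩
        · refine ⟨g, hg, ?_⟩
          intro r hr
          rw [Finset.mem_singleton] at hr
          subst hr
          exact ⟨fun _ => h1, fun hcon => absurd hxS hcon⟩
        · refine ⟨g', hg', ?_⟩
          intro r hr
          rw [Finset.mem_singleton] at hr
          subst hr
          exact ⟨fun _ => h1, fun hcon => absurd hxS hcon⟩
      · rcases hq2 with ⟨h1, h2⟩ | ⟨h1, h2⟩
        · refine ⟨g', hg', ?_⟩
          intro r hr
          rw [Finset.mem_singleton] at hr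
          subst hr
          exact ⟨fun hcon => absurd hcon hxS, fun _ => h2⟩
        · refine ⟨g, hg, ?_⟩
          intro r hr
          rw [Finset.mem_singleton] at hr
          subst hr
          exact ⟨fun hcon => absurd hcon hxS, fun _ => h2⟩
    have := hcap {q} hshat1 (by simpa using hqLab)
      (by intro a ha b hb _; rw [Finset.mem_singleton] at ha hb; rw [ha, hb])
    simp at this
    omega
  · -- d ≥ 1
    rw [bndN, if_neg (by omega)]
    by_contra hcbig
    push_neg at hcbig
    have hthresh : 2 * (2 * Lab.card) ^ (KN m Q d) ≤ 𝒢.card := by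
      rw [hLabcard]
      have : 0 < 2 * (2 * RnN m Q) ^ (KN m Q d) := by positivity
      omega
    obtain ⟨SP, hSP, hSPcard⟩ := core_claim CHIf CLOf Lab hLpos hfour (KN m Q d) 𝒢 hpair' hthresh
    have hcount : SP.card ≤ YN m Q d := by
      have := SP_count SP Lab d (fun P hP => ⟨(hSP P hP).2.1,
        hcap P (hSP P hP).1 (hSP P hP).2.1 (hSP P hP).2.2⟩)
      rwa [hLabcard] at this
    have hlt : YN m Q d < 2 ^ (KN m Q d) := by
      rw [KN]
      exact Nat.lt_pow_succ_log_self (by norm_num) _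
    omega

open Classical in
lemma maxnet (hQ : 3 ≤ Q) (G : Set (X → Fin Q → ℝ)) {γ : ℝ} (hγ0 : 0 < γ)
    (m d : ℕ) (hm : 0 < m)
    (hd : NdimMargin (γ / 24) ((fun g : X → Fin Q → ℝ => trunc γ ∘ deltaVec ∘ g) '' G)
            = (d : ℕ∞))
    (hdm : d ≤ 2 * m) (s : Finset X) (hs : s.card = 2 * m) :
    properCov (γ / 4) ((fun g : X → Fin Q → ℝ => trunc γ ∘ deltaStarVec ∘ g) '' G)
      (dLinf s) ≤ (bndN m Q d : ℕ∞) := by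
  have hQ2 : 2 ≤ Q := by omega
  set Fstar := ((fun g : X → Fin Q → ℝ => trunc γ ∘ deltaStarVec ∘ g) '' G) with hFstar
  rcases Set.eq_empty_or_nonempty G with hG | hG
  · -- empty class : the empty net works
    have : (0 : ℕ∞) ∈ {n : ℕ∞ | ∃ N : Finset (X → Fin Q → ℝ), ↑N ⊆ Fstar ∧
        (∀ f ∈ Fstar, ∃ c ∈ N, dLinf s f c < γ/4) ∧ n = N.card} := by
      refine ⟨∅, by simp, ?_, by simp⟩
      intro f hf
      rw [hFstar, hG] at hf
      simp at hf
    exact le_trans (sInf_le this) (by simp)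
  · -- nonempty class
    set Pprop : ℕ → Prop := fun n => ∃ 𝒢 : Finset (X → Fin Q → ℝ), ↑𝒢 ⊆ G ∧
      (∀ g ∈ 𝒢, ∀ g' ∈ 𝒢, g ≠ g' →
        ∃ x ∈ s, SD (Sym hQ2 γ (g x)) (Sym hQ2 γ (g' x))) ∧ 𝒢.card = n with hPprop
    have hP0 : Pprop 0 := ⟨∅, by simp, by simp, rfl⟩
    have hPb : ∀ n, Pprop n → n ≤ bndN m Q d := by
      rintro n ⟨𝒢, h1, h2, h3⟩
      rw [← h3]
      exact keybound hQ G hγ0 m d hm hd hdm s hs 𝒢 h1 h2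
    set N₀ := Nat.findGreatest Pprop (bndN m Q d) with hN₀def
    have hN₀ : Pprop N₀ := Nat.findGreatest_spec (Nat.zero_le _) hP0
    obtain ⟨𝒢m, hm1, hm2, hm3⟩ := hN₀
    have hmax : ∀ g ∈ G, ∃ p ∈ 𝒢m, ∀ x ∈ s,
        ¬ SD (Sym hQ2 γ (g x)) (Sym hQ2 γ (p x)) := by
      intro g hg
      by_cases hgm : g ∈ 𝒢m
      · exact ⟨g, hgm, fun x _ => SD_irrefl _⟩
      · by_contra hc
        push_neg at hc
        -- every p in 𝒢m is strongly distinct from g somewhere on s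
        have hext : Pprop (N₀ + 1) := by
          refine ⟨insert g 𝒢m, ?_, ?_, ?_⟩
          · intro g' hg'
            rcases Finset.mem_insert.1 (by exact_mod_cast hg') with rfl | h
            · exact hg
            · exact hm1 h
          · intro g₁ hg₁ g₂ hg₂ hne
            rcases Finset.mem_insert.1 hg₁ with rfl | h₁
            · rcases Finset.mem_insert.1 hg₂ with rfl | h₂
              · exact absurd rfl hne
              · obtain ⟨x, hx, hsd⟩ := hc g₂ h₂
                exact ⟨x, hx, hsd⟩
            · rcases Finset.mem_insert.1 hg₂ with rfl | h₂
              · obtain ⟨x, hx, hsd⟩ := hc g₁ h₁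
                exact ⟨x, hx, SD_symm hsd⟩
              · exact hm2 g₁ h₁ g₂ h₂ hne
          · rw [Finset.card_insert_of_notMem hgm, hm3]
        have hle : N₀ + 1 ≤ bndN m Q d := hPb _ hext
        have := Nat.le_findGreatest hle hext
        omega
    -- the net
    set Nst := 𝒢m.image (fun g => trunc γ ∘ deltaStarVec ∘ g) with hNst
    have hsne : s.Nonempty := by
      rw [← Finset.card_pos, hs]; omega
    have hmem : (Nst.card : ℕ∞) ∈ {n : ℕ∞ | ∃ N : Finset (X → Fin Q → ℝ), ↑N ⊆ Fstar ∧
        (∀ f ∈ Fstar, ∃ c ∈ N, dLinf s f c < γ/4) ∧ n = N.card} := by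
      refine ⟨Nst, ?_, ?_, rfl⟩
      · intro f hf
        obtain ⟨g, hg, rfl⟩ := Finset.mem_image.1 (by exact_mod_cast hf)
        exact ⟨g, hm1 hg, rfl⟩
      · intro f hf
        obtain ⟨g₀, hg₀, rfl⟩ := hf
        obtain ⟨p, hp, hnp⟩ := hmax g₀ hg₀
        refine ⟨trunc γ ∘ deltaStarVec ∘ p, Finset.mem_image.2 ⟨p, hp, rfl⟩, ?_⟩
        rw [dLinf, dif_pos hsne]
        rw [Finset.sup'_lt_iff]
        intro x hx
        rw [pi_norm_lt_iff (by linarith : (0:ℝ) < γ/4)]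
        intro k
        simp only [Pi.sub_apply, Function.comp_apply, Real.norm_eq_abs]
        exact dist_lt hQ2 hγ0 (g₀ x) (p x) (hnp x hx) k
    calc properCov (γ/4) Fstar (dLinf s) ≤ (Nst.card : ℕ∞) := sInf_le hmem
      _ ≤ (bndN m Q d : ℕ∞) := by
          have h1 : Nst.card ≤ 𝒢m.card := Finset.card_image_le
          have h2 : N₀ ≤ bndN m Q d := Nat.findGreatest_le _
          have : Nst.card ≤ bndN m Q d := by omega
          exact_mod_cast this

lemma RnR_eq (m Q : ℕ) (hQ : 3 ≤ Q) :
    ((RnN m Q : ℕ) : ℝ) = 18 * m * Q * ((Q:ℝ) - 1) := by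
  have hQQ : Q ≤ Q * Q := Nat.le_mul_of_pos_left Q (by omega)
  rw [RnN]
  push_cast [Nat.cast_sub hQQ]
  ring

lemma twoY_le (m Q d : ℕ) (hQ : 3 ≤ Q) (hm : 0 < m) (hd1 : 1 ≤ d) (hdm : d ≤ 2*m) :
    (2 * (YN m Q d : ℝ)) ≤ (23 * Real.exp 1 * m * Q * ((Q:ℝ) - 1) / d) ^ d := by
  have hqq : 3 * Q ≤ Q * Q := Nat.mul_le_mul_right Q hQ
  have h6 : 6 ≤ Q * Q - Q := by omega
  set u : ℝ := (m:ℝ) * Q * ((Q:ℝ) - 1) with hu_def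
  have hu : 6 ≤ u := by
    have hm1 : (1:ℝ) ≤ m := by exact_mod_cast hm
    have hq3 : (3:ℝ) ≤ Q := by exact_mod_cast hQ
    have h1 : (6:ℝ) ≤ (Q:ℝ) * ((Q:ℝ) - 1) := by nlinarith
    have h2 : (1:ℝ) * 6 ≤ (m:ℝ) * ((Q:ℝ) * ((Q:ℝ) - 1)) :=
      mul_le_mul hm1 h1 (by norm_num) (by linarith)
    have h3 : u = (m:ℝ) * ((Q:ℝ) * ((Q:ℝ) - 1)) := by rw [hu_def]; ring
    linarith
  have hu0 : 0 < u := by linarith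
  have he : (2.7182818283:ℝ) < Real.exp 1 := Real.exp_one_gt_d9
  have hRnR : ((RnN m Q : ℕ) : ℝ) = 18 * u := by
    rw [RnR_eq m Q hQ, hu_def]; ring
  have hZ_eq : 23 * Real.exp 1 * m * Q * ((Q:ℝ) - 1) / d = 23 * Real.exp 1 * u / d := by
    rw [hu_def]; ring
  rw [hZ_eq]
  have heu : 0 < Real.exp 1 * u := mul_pos (Real.exp_pos 1) hu0
  obtain rfl | rfl | hd3 : d = 1 ∨ d = 2 ∨ 3 ≤ d := by omega
  · -- d = 1
    have hY : YN m Q 1 = 1 + RnN m Q := by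
      rw [YN, Finset.sum_range_succ, Finset.sum_range_succ, Finset.sum_range_zero,
        Nat.choose_zero_right, Nat.choose_one_right]
    rw [hY, pow_one]
    push_cast
    rw [hRnR]
    have hmm : (2.7182818283:ℝ) * u ≤ Real.exp 1 * u :=
      mul_le_mul_of_nonneg_right he.le hu0.le
    have hre : (23:ℝ) * Real.exp 1 * u / (1:ℝ) = 23 * (Real.exp 1 * u) := by
      ring
    rw [hre]
    nlinarith
  · -- d = 2
    have hC : (RnN m Q).choose 2 ≤ RnN m Q * RnN m Q := by
      rw [Nat.choose_two_right]
      exact le_trans (Nat.div_le_self _ 2) (Nat.mul_le_mul_left _ (Nat.sub_le _ _))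
    have hY : YN m Q 2 ≤ 1 + RnN m Q + RnN m Q * RnN m Q := by
      rw [YN, Finset.sum_range_succ, Finset.sum_range_succ, Finset.sum_range_succ,
        Finset.sum_range_zero, Nat.choose_zero_right, Nat.choose_one_right]
      omega
    have hYR : (YN m Q 2 : ℝ) ≤ 1 + 18*u + (18*u)*(18*u) := by
      calc (YN m Q 2 : ℝ) ≤ ((1 + RnN m Q + RnN m Q * RnN m Q : ℕ) : ℝ) := by
            exact_mod_cast hY
        _ = 1 + 18*u + (18*u)*(18*u) := by push_cast; rw [hRnR]
    have he2 : (7.389056:ℝ) ≤ Real.exp 1 * Real.exp 1 := by nlinarith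
    have hexpand : (23 * Real.exp 1 * u / ((2:ℕ):ℝ)) ^ 2
        = (529/4) * (Real.exp 1 * Real.exp 1) * (u*u) := by push_cast; ring
    rw [hexpand]
    have hstep : (977:ℝ) * (u*u) ≤ (529/4) * (Real.exp 1 * Real.exp 1) * (u*u) := by
      have huu : (0:ℝ) ≤ u*u := by positivity
      nlinarith
    have hquad : 2*(1 + 18*u + (18*u)*(18*u)) ≤ (977:ℝ)*(u*u) := by
      nlinarith [mul_nonneg (by linarith : (0:ℝ) ≤ u - 6) (by linarith : (0:ℝ) ≤ u)]
    linarith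
  · -- d ≥ 3
    have hdR : d ≤ RnN m Q := by
      rw [RnN]
      have h1 : 18 * m * 6 ≤ 18 * m * (Q*Q - Q) := by
        apply Nat.mul_le_mul_left
        exact h6
      omega
    have hYb := sum_choose_le (RnN m Q) d hd1 hdR
    rw [← YN] at hYb
    have hd0 : (0:ℝ) < d := by exact_mod_cast hd1
    set ρ : ℝ := Real.exp 1 * u / d with hρdef
    have hρ0 : 0 < ρ := div_pos heu hd0
    have e1 : Real.exp 1 * (RnN m Q : ℝ) / d = 18 * ρ := by
      rw [hRnR, hρdef]; ring
    have e2 : 23 * Real.exp 1 * u / d = 23 * ρ := by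
      rw [hρdef]; ring
    rw [e1] at hYb
    rw [e2]
    have h23 : 2 * (18:ℝ)^d ≤ 23^d := by
      have hb : (1:ℝ) ≤ 23/18 := by norm_num
      have m1 : ((23:ℝ)/18)^3 ≤ (23/18)^d := pow_le_pow_right₀ hb hd3
      have m2 : (2:ℝ) ≤ ((23:ℝ)/18)^3 := by norm_num
      have m3 : (23:ℝ)^d = (23/18)^d * 18^d := by
        rw [← mul_pow]; norm_num
      have m4 : 2 * (18:ℝ)^d ≤ ((23:ℝ)/18)^d * 18^d :=
        mul_le_mul_of_nonneg_right (m2.trans m1) (pow_nonneg (by norm_num) d)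
      rw [m3]; exact m4
    calc 2 * (YN m Q d : ℝ) ≤ 2 * (18*ρ)^d := by linarith
      _ = 2 * 18^d * ρ^d := by rw [mul_pow]; ring
      _ ≤ 23^d * ρ^d := mul_le_mul_of_nonneg_right h23 (pow_nonneg hρ0.le d)
      _ = (23*ρ)^d := by rw [mul_pow]

lemma K_le_E (m Q d : ℕ) (hQ : 3 ≤ Q) (hm : 0 < m) (hd1 : 1 ≤ d) (hdm : d ≤ 2*m) :
    ((KN m Q d : ℕ) : ℤ) ≤
      ⌈(d:ℝ) * Real.logb 2 (23 * Real.exp 1 * m * Q * ((Q:ℝ) - 1) / d)⌉ := by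
  set Z : ℝ := 23 * Real.exp 1 * m * Q * ((Q:ℝ) - 1) / d with hZdef
  have hqq : 3 * Q ≤ Q * Q := Nat.mul_le_mul_right Q hQ
  have hu : (6:ℝ) ≤ (m:ℝ) * Q * ((Q:ℝ) - 1) := by
    have hm1 : (1:ℝ) ≤ m := by exact_mod_cast hm
    have hq3 : (3:ℝ) ≤ Q := by exact_mod_cast hQ
    have h1 : (6:ℝ) ≤ (Q:ℝ) * ((Q:ℝ) - 1) := by nlinarith
    have h2 : (1:ℝ) * 6 ≤ (m:ℝ) * ((Q:ℝ) * ((Q:ℝ) - 1)) :=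
      mul_le_mul hm1 h1 (by norm_num) (by linarith)
    nlinarith
  have hd0 : (0:ℝ) < d := by exact_mod_cast hd1
  have hZ0 : 0 < Z := by
    rw [hZdef]
    apply div_pos _ hd0
    have : (0:ℝ) < 23 * Real.exp 1 := by positivity
    nlinarith
  have hY1 : 1 ≤ YN m Q d := by
    rw [YN]
    calc 1 = (RnN m Q).choose 0 := (Nat.choose_zero_right _).symm
      _ ≤ ∑ i ∈ Finset.range (d+1), (RnN m Q).choose i := by
          apply Finset.single_le_sum (f := fun i => (RnN m Q).choose i)
          · intro i _; exact Nat.zero_le _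
          · exact Finset.mem_range.2 (by omega)
  have h2K : (2:ℕ)^(KN m Q d) ≤ 2 * YN m Q d := by
    rw [KN, pow_succ]
    have := Nat.pow_log_le_self 2 (show YN m Q d ≠ 0 by omega)
    omega
  have h2KR : (2:ℝ)^(KN m Q d) ≤ Z^d := by
    have hc : ((2:ℕ)^(KN m Q d) : ℝ) ≤ (2 * YN m Q d : ℝ) := by
      exact_mod_cast h2K
    push_cast at hc
    calc (2:ℝ)^(KN m Q d) ≤ 2 * (YN m Q d : ℝ) := hc
      _ ≤ Z^d := twoY_le m Q d hQ hm hd1 hdm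
  have hKR : ((KN m Q d : ℕ) : ℝ) ≤ (d:ℝ) * Real.logb 2 Z := by
    have l1 : Real.logb 2 ((2:ℝ)^(KN m Q d)) = (KN m Q d : ℝ) := by
      rw [Real.logb_pow, Real.logb_self_eq_one (by norm_num)]
      ring
    have l2 : Real.logb 2 ((2:ℝ)^(KN m Q d)) ≤ Real.logb 2 (Z^d) :=
      Real.logb_le_logb_of_le (by norm_num) (by positivity) h2KR
    have l3 : Real.logb 2 (Z^d) = (d:ℝ) * Real.logb 2 Z := Real.logb_pow 2 Z d
    rw [← l1, ← l3] at *
    exact l2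
  calc ((KN m Q d : ℕ) : ℤ) = ⌈((KN m Q d : ℕ) : ℝ)⌉ := by
        rw [Int.ceil_natCast]
    _ ≤ ⌈(d:ℝ) * Real.logb 2 Z⌉ := Int.ceil_le_ceil hKR

end Inst
end GSL

/-- generalized Sauer lemma bounding the covering numbers of `Δ*_γ G` in
terms of the Natarajan dimension with margin `γ/24` of `Δ_γ G`. -/
theorem generalized_sauer_lemma
    {X : Type*} (Q : ℕ) (hQ : 3 ≤ Q) (G : Set (X → Fin Q → ℝ))
    (γ : ℝ) (hγ : γ ∈ Set.Ioc (0 : ℝ) 1) (m : ℕ) (hm : 0 < m)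
    (d : ℕ)
    (hd : NdimMargin (γ / 24) ((fun g : X → Fin Q → ℝ => trunc γ ∘ deltaVec ∘ g) '' G)
            = (d : ℕ∞))
    (hdm : d ≤ 2 * m) :
    ∃ n : ℕ,
      covNum (γ / 4) ((fun g : X → Fin Q → ℝ => trunc γ ∘ deltaStarVec ∘ g) '' G) (2 * m)
          = (n : ℕ∞) ∧
      (n : ℝ) < 2 * ((288 * m * Q ^ 2 * (Q - 1) : ℝ)) ^
        (⌈(d : ℝ) * Real.logb 2 (23 * Real.exp 1 * m * Q * (Q - 1) / d)⌉ : ℤ) := by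
  classical
  obtain ⟨hγ0, hγ1⟩ := hγ
  have hcov : covNum (γ/4) ((fun g : X → Fin Q → ℝ => trunc γ ∘ deltaStarVec ∘ g) '' G) (2*m)
      ≤ (GSL.bndN m Q d : ℕ∞) := by
    rw [covNum]
    apply iSup₂_le
    intro s hs
    exact GSL.maxnet hQ G hγ0 m d hm hd hdm s hs
  have hne : covNum (γ/4) ((fun g : X → Fin Q → ℝ => trunc γ ∘ deltaStarVec ∘ g) '' G) (2*m)
      ≠ ⊤ := by
    intro hc
    rw [hc] at hcov
    exact absurd (le_antisymm le_top hcov).symm (by simp)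
  obtain ⟨n, hn⟩ := WithTop.ne_top_iff_exists.1 hne
  refine ⟨n, hn.symm, ?_⟩
  have hnb : n ≤ GSL.bndN m Q d := by
    rw [← hn] at hcov
    exact Nat.cast_le.mp hcov
  rcases Nat.eq_zero_or_pos d with rfl | hd1
  · -- d = 0
    simp only [Nat.cast_zero, zero_mul, Int.ceil_zero, zpow_zero, mul_one]
    have h1 : n ≤ 1 := by
      rw [GSL.bndN, if_pos rfl] at hnb
      exact hnb
    have : (n:ℝ) ≤ 1 := by exact_mod_cast h1
    linarith
  · -- d ≥ 1
    have hb : GSL.bndN m Q d = 2 * (2 * GSL.RnN m Q) ^ (GSL.KN m Q d) - 1 := by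
      rw [GSL.bndN, if_neg (by omega)]
    have hK := GSL.K_le_E m Q d hQ hm hd1 hdm
    have hRnR := GSL.RnR_eq m Q hQ
    have hm1 : (1:ℝ) ≤ m := by exact_mod_cast hm
    have hq3 : (3:ℝ) ≤ Q := by exact_mod_cast hQ
    set B : ℝ := 288 * (m:ℝ) * (Q:ℝ) ^ 2 * ((Q:ℝ) - 1) with hBdef
    set E : ℤ := ⌈(d : ℝ) * Real.logb 2 (23 * Real.exp 1 * m * Q * ((Q:ℝ) - 1) / d)⌉ with hEdef
    have g1 : (9:ℝ) ≤ (Q:ℝ)^2 := by nlinarith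
    have g2 : (2:ℝ) ≤ (Q:ℝ) - 1 := by linarith
    have g3 : (18:ℝ) ≤ (Q:ℝ)^2 * ((Q:ℝ)-1) := by nlinarith [mul_le_mul g1 g2 (by norm_num) (by nlinarith)]
    have g4 : (18:ℝ) ≤ (m:ℝ) * ((Q:ℝ)^2 * ((Q:ℝ)-1)) := by nlinarith
    have hB1 : (1:ℝ) ≤ B := by
      rw [hBdef]
      nlinarith
    have h2RB : 2 * ((GSL.RnN m Q : ℕ):ℝ) ≤ B := by
      rw [hRnR, hBdef]
      have hpos : (0:ℝ) ≤ (m:ℝ)*(Q:ℝ)*((Q:ℝ)-1) := by nlinarith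
      have hfac : (0:ℝ) ≤ (288*(Q:ℝ) - 36) := by linarith
      nlinarith [mul_nonneg hpos hfac]
    have hfin : ((2 * GSL.RnN m Q : ℕ):ℝ) ^ (GSL.KN m Q d) ≤ B ^ E := by
      have step1 : ((2 * GSL.RnN m Q : ℕ):ℝ) ^ (GSL.KN m Q d) ≤ B ^ (GSL.KN m Q d) := by
        apply pow_le_pow_left₀ (by positivity)
        push_cast
        push_cast at h2RB
        linarith
      have step2 : B ^ (GSL.KN m Q d) = B ^ ((GSL.KN m Q d : ℕ) : ℤ) :=
        (zpow_natCast B (GSL.KN m Q d)).symm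
      have step3 : B ^ ((GSL.KN m Q d : ℕ) : ℤ) ≤ B ^ E :=
        zpow_le_zpow_right₀ hB1 hK
      calc ((2 * GSL.RnN m Q : ℕ):ℝ) ^ (GSL.KN m Q d) ≤ B ^ (GSL.KN m Q d) := step1
        _ = B ^ ((GSL.KN m Q d : ℕ) : ℤ) := step2
        _ ≤ B ^ E := step3
    have hT1 : 1 ≤ 2 * (2 * GSL.RnN m Q) ^ (GSL.KN m Q d) := by
      have hqq : 3 * Q ≤ Q * Q := Nat.mul_le_mul_right Q hQ
      have h6 : 6 ≤ Q * Q - Q := by omega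
      have hRnpos : 0 < GSL.RnN m Q := by
        rw [GSL.RnN]
        nlinarith
      have := pow_pos (show 0 < 2 * GSL.RnN m Q by omega) (GSL.KN m Q d)
      omega
    have hcast : ((2 * (2 * GSL.RnN m Q) ^ (GSL.KN m Q d) - 1 : ℕ) : ℝ)
        = 2 * ((2 * GSL.RnN m Q : ℕ):ℝ) ^ (GSL.KN m Q d) - 1 := by
      rw [Nat.cast_sub hT1]
      push_cast
      ring
    have hnR : (n:ℝ) ≤ 2 * ((2 * GSL.RnN m Q : ℕ):ℝ) ^ (GSL.KN m Q d) - 1 := by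
      rw [← hcast]
      exact_mod_cast (hb ▸ hnb)
    calc (n:ℝ) ≤ 2 * ((2 * GSL.RnN m Q : ℕ):ℝ) ^ (GSL.KN m Q d) - 1 := hnR
      _ < 2 * ((2 * GSL.RnN m Q : ℕ):ℝ) ^ (GSL.KN m Q d) := by linarith
      _ ≤ 2 * B ^ E := by linarith [hfin]
end

section
/- Let Φ be a map from X into a Hilbert space E whose image Φ(X) is included in the closed ball of radius Λ_Φ about the origin, and let H̄ be the class of functions h : X → ℝ^Q of the form h(x) = ( ⟨w_k, Φ(x)⟩ )_{1≤k≤Q} (b = 0), with w_1,...,w_Q ∈ E satisfying (1/2) · max_{1≤k<l≤Q} ‖w_k − w_l‖ ≤ Λ_w. Then for every ε > 0, the Natarajan dimension with margin ε of Δ H̄ satisfies: N-dim(Δ H̄, ε) ≤ (Q(Q−1)/2) · ( Λ_w Λ_Φ / ε )². -/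
open Finset ENNReal

open Finset ENNReal

open RealInnerProductSpace

/-- Greedy sign-choice: there exist ±1 signs making the norm of the signed sum small. -/
lemma exists_signs {X : Type*} {E : Type*} [NormedAddCommGroup E] [InnerProductSpace ℝ E]
    (t : Finset X) (ψ : X → E) :
    ∃ r : X → ℝ, (∀ x ∈ t, r x = 1 ∨ r x = -1) ∧
      ‖∑ x ∈ t, r x • ψ x‖ ^ 2 ≤ ∑ x ∈ t, ‖ψ x‖ ^ 2 := by
  classical
  induction t using Finset.induction_on with
  | empty => exact ⟨fun _ => 1, by simp, by simp⟩
  | @insert a t ha ih =>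
    obtain ⟨r, hr, hle⟩ := ih
    set S := ∑ x ∈ t, r x • ψ x with hS
    set c : ℝ := if (⟪ψ a, S⟫ : ℝ) ≤ 0 then 1 else -1 with hc
    refine ⟨Function.update r a c, ?_, ?_⟩
    · intro x hx
      rcases Finset.mem_insert.mp hx with rfl | hx
      · rw [Function.update_self]
        by_cases h : (⟪ψ x, S⟫ : ℝ) ≤ 0
        · left; simp [hc, h]
        · right; simp [hc, h]
      · rw [Function.update_of_ne (ne_of_mem_of_not_mem hx ha)]
        exact hr x hx
    · rw [Finset.sum_insert ha, Finset.sum_insert ha, Function.update_self]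
      have hrest : ∑ x ∈ t, Function.update r a c x • ψ x = S := by
        rw [hS]
        refine Finset.sum_congr rfl (fun x hx => ?_)
        rw [Function.update_of_ne (ne_of_mem_of_not_mem hx ha)]
      rw [hrest]
      have hnorm : ‖c • ψ a‖ = ‖ψ a‖ := by
        rw [norm_smul, Real.norm_eq_abs]
        have : |c| = 1 := by
          rw [hc]; split_ifs <;> norm_num
        rw [this, one_mul]
      have hinner : (⟪c • ψ a, S⟫ : ℝ) ≤ 0 := by
        rw [real_inner_smul_left]
        by_cases h : (⟪ψ a, S⟫ : ℝ) ≤ 0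
        · have : c = 1 := by rw [hc, if_pos h]
          rw [this, one_mul]; exact h
        · have : c = -1 := by rw [hc, if_neg h]
          rw [this]; push_neg at h; nlinarith
      have hsq := norm_add_sq_real (c • ψ a) S
      have : ‖c • ψ a + S‖ ^ 2 ≤ ‖ψ a‖ ^ 2 + ‖S‖ ^ 2 := by
        rw [hsq, hnorm]; linarith
      linarith

/-- Fat-shattering type bound for bounded linear functionals. -/
lemma fiber_bound {X : Type*} {E : Type*} [NormedAddCommGroup E] [InnerProductSpace ℝ E]
    (ε ΛΦ Λw : ℝ) (hε : 0 < ε) (t : Finset X) (ψ : X → E) (b : X → ℝ)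
    (hψ : ∀ x ∈ t, ‖ψ x‖ ≤ ΛΦ)
    (H : ∀ y : X → Bool, ∃ u : E, ‖u‖ ≤ Λw ∧ ∀ x ∈ t,
      (y x = true → ε + b x ≤ ⟪u, ψ x⟫) ∧ (y x = false → ⟪u, ψ x⟫ ≤ b x - ε)) :
    (t.card : ℝ) ≤ (Λw * ΛΦ / ε) ^ 2 := by
  classical
  obtain ⟨r, hr, hSle⟩ := exists_signs t ψ
  rcases t.eq_empty_or_nonempty with rfl | ⟨x₀, hx₀⟩
  · simp; positivity
  set y : X → Bool := fun x => if r x = 1 then true else false with hy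
  obtain ⟨u, hu, h1⟩ := H y
  obtain ⟨u', hu', h2⟩ := H (fun x => !(y x))
  have hΛΦ : 0 ≤ ΛΦ := le_trans (norm_nonneg _) (hψ x₀ hx₀)
  have hΛw : 0 ≤ Λw := le_trans (norm_nonneg _) hu
  set S := ∑ x ∈ t, r x • ψ x with hS
  have key : ∀ x ∈ t, 2 * ε ≤ ⟪u - u', r x • ψ x⟫ := by
    intro x hx
    rcases hr x hx with h | h
    · have hyx : y x = true := by simp [hy, h]
      have a1 := (h1 x hx).1 hyx
      have a2 := (h2 x hx).2 (by simp [hyx])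
      rw [h, one_smul, inner_sub_left]
      linarith
    · have hne1 : r x ≠ 1 := by rw [h]; norm_num
      have hyx : y x = false := by simp [hy, hne1]
      have a1 := (h1 x hx).2 hyx
      have a2 := (h2 x hx).1 (by simp [hyx])
      rw [h, real_inner_smul_right, inner_sub_left]
      linarith
  have hsum : 2 * ε * t.card ≤ ⟪u - u', S⟫ := by
    rw [hS, inner_sum]
    calc 2 * ε * t.card = ∑ _x ∈ t, 2 * ε := by
          rw [Finset.sum_const, nsmul_eq_mul]; ring
      _ ≤ _ := Finset.sum_le_sum key
  have hcs : (⟪u - u', S⟫ : ℝ) ≤ ‖u - u'‖ * ‖S‖ := real_inner_le_norm _ _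
  have hv : ‖u - u'‖ ≤ 2 * Λw := le_trans (norm_sub_le _ _) (by linarith)
  have hS2 : ‖S‖ ^ 2 ≤ t.card * ΛΦ ^ 2 := by
    refine le_trans hSle ?_
    calc ∑ x ∈ t, ‖ψ x‖ ^ 2 ≤ ∑ x ∈ t, ΛΦ ^ 2 :=
          Finset.sum_le_sum (fun x hx => by nlinarith [hψ x hx, norm_nonneg (ψ x)])
      _ = t.card * ΛΦ ^ 2 := by rw [Finset.sum_const, nsmul_eq_mul]
  have hm : (1 : ℝ) ≤ t.card := by
    exact_mod_cast Finset.card_pos.mpr ⟨x₀, hx₀⟩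
  have h2εm : 2 * ε * t.card ≤ 2 * Λw * ‖S‖ := by
    refine le_trans hsum (le_trans hcs ?_)
    exact mul_le_mul_of_nonneg_right hv (norm_nonneg S) |>.trans_eq rfl
  have hsq : (2 * ε * t.card) ^ 2 ≤ (2 * Λw * ‖S‖) ^ 2 := by
    apply mul_self_le_mul_self (by positivity) h2εm |>.trans_eq (by ring) |>.trans_eq' (by ring)
  have hfin : ε ^ 2 * t.card ≤ Λw ^ 2 * ΛΦ ^ 2 := by
    have hc : (0 : ℝ) < t.card := by linarith
    have : ε ^ 2 * t.card * t.card ≤ Λw ^ 2 * ΛΦ ^ 2 * t.card := by nlinarith [norm_nonneg S]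
    exact le_of_mul_le_mul_right this hc
  rw [div_pow, mul_pow, le_div_iff₀ (by positivity)]
  linarith

/-- Componentwise bound on the margin operator. -/
lemma deltaVec_le {Q : ℕ} (v : Fin Q → ℝ) (j j' : Fin Q) (h : j' ≠ j) :
    deltaVec v j ≤ (v j - v j') / 2 := by
  have hmem : j' ∈ Finset.univ.erase j := Finset.mem_erase.mpr ⟨h, Finset.mem_univ _⟩
  have hne : (Finset.univ.erase j).Nonempty := ⟨j', hmem⟩
  unfold deltaVec maxOther
  rw [dif_pos hne]
  have := Finset.le_sup' v hmem
  linarith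

/-- Bound on the cardinality of an `ε`-N-shattered set. -/
lemma shattered_card_le {X : Type*} {E : Type*} [NormedAddCommGroup E] [InnerProductSpace ℝ E]
    (Q : ℕ) (Φ : X → E) (ΛΦ Λw : ℝ) (hΦ : ∀ x : X, ‖Φ x‖ ≤ ΛΦ)
    (ε : ℝ) (hε : 0 < ε) (s : Finset X)
    (hs : NShatters ε ((fun h : X → Fin Q → ℝ => deltaVec ∘ h) ''
      {h | ∃ w : Fin Q → E,
        (∀ k l : Fin Q, k < l → (1 / 2 : ℝ) * ‖w k - w l‖ ≤ Λw) ∧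
        h = fun x k => inner ℝ (w k) (Φ x)}) s) :
    (s.card : ℝ) ≤ (Q.choose 2 : ℝ) * (Λw * ΛΦ / ε) ^ 2 := by
  classical
  obtain ⟨i₁, i₂, b, hne, hy⟩ := hs
  set T : Finset (Sym2 (Fin Q)) := Finset.univ.filter (fun a => ¬ a.IsDiag) with hT
  have hmap : ∀ x ∈ s, Sym2.mk (i₁ x) (i₂ x) ∈ T := fun x hx =>
    Finset.mem_filter.mpr ⟨Finset.mem_univ _, by
      rw [Sym2.mk_isDiag_iff]; exact hne x hx⟩
  have hcard := Finset.card_eq_sum_card_fiberwise hmap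
  have hfiber : ∀ a ∈ T,
      ((s.filter (fun x => Sym2.mk (i₁ x) (i₂ x) = a)).card : ℝ) ≤ (Λw * ΛΦ / ε) ^ 2 := by
    intro a
    induction a using Sym2.ind with
    | _ k l =>
      intro ha
      have hkl : k ≠ l := by
        have h2 := (Finset.mem_filter.mp ha).2
        rwa [Sym2.mk_isDiag_iff] at h2
      set t := s.filter (fun x => Sym2.mk (i₁ x) (i₂ x) = Sym2.mk k l) with ht
      have horient : ∀ x ∈ t, (i₁ x = k ∧ i₂ x = l) ∨ (i₁ x = l ∧ i₂ x = k) := by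
        intro x hx
        have h2 := (Finset.mem_filter.mp hx).2
        rwa [Sym2.eq_iff] at h2
      set σ : X → ℝ := fun x => if i₁ x = k then 1 else -1 with hσ
      set ψ : X → E := fun x => σ x • Φ x with hψdef
      refine fiber_bound ε ΛΦ Λw hε t ψ b ?_ ?_
      · intro x _
        have habs : |σ x| = 1 := by
          rw [hσ]; dsimp only; split_ifs <;> norm_num
        rw [hψdef]; dsimp only
        rw [norm_smul, Real.norm_eq_abs, habs, one_mul]
        exact hΦ x
      · intro y
        obtain ⟨f, hf, hfy⟩ := hy y
        obtain ⟨h, hh, rfl⟩ := hf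
        rw [Set.mem_setOf_eq] at hh
        obtain ⟨w, hw, rfl⟩ := hh
        refine ⟨(2 : ℝ)⁻¹ • (w k - w l), ?_, ?_⟩
        · rw [norm_smul, Real.norm_eq_abs, abs_of_pos (by norm_num : (0:ℝ) < 2⁻¹)]
          rcases lt_or_gt_of_ne hkl with h' | h'
          · have := hw k l h'; linarith
          · have := hw l k h'; rw [norm_sub_rev]; linarith
        · intro x hx
          have hxs : x ∈ s := (Finset.mem_filter.mp hx).1
          have hfx := hfy x hxs
          set v : Fin Q → ℝ := fun j => inner ℝ (w j) (Φ x) with hv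
          have hukl : (⟪(2 : ℝ)⁻¹ • (w k - w l), Φ x⟫ : ℝ) = (v k - v l) / 2 := by
            rw [real_inner_smul_left, inner_sub_left, hv]
            ring
          rcases horient x hx with ⟨ha1, ha2⟩ | ⟨ha1, ha2⟩
          · have hσ1 : σ x = 1 := by rw [hσ]; exact if_pos ha1
            have hψx : ψ x = Φ x := by rw [hψdef]; dsimp only; rw [hσ1, one_smul]
            constructor
            · intro hyx
              have hthis : deltaVec v (i₁ x) - b x ≥ ε := hfx.1 hyx
              rw [ha1] at hthis
              have hd := deltaVec_le v k l hkl.symm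
              rw [hψx, hukl]
              linarith
            · intro hyx
              have hthis : deltaVec v (i₂ x) + b x ≥ ε := hfx.2 hyx
              rw [ha2] at hthis
              have hd := deltaVec_le v l k hkl
              rw [hψx, hukl]
              linarith
          · have hσ1 : σ x = -1 := by
              rw [hσ]; dsimp only
              rw [if_neg]; rw [ha1]; exact hkl.symm
            have hψx : (⟪(2 : ℝ)⁻¹ • (w k - w l), ψ x⟫ : ℝ) = -((v k - v l) / 2) := by
              rw [hψdef]; dsimp only
              rw [hσ1, real_inner_smul_right, hukl]; ring
            constructor
            · intro hyx
              have hthis : deltaVec v (i₁ x) - b x ≥ ε := hfx.1 hyx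
              rw [ha1] at hthis
              have hd := deltaVec_le v l k hkl
              rw [hψx]
              linarith
            · intro hyx
              have hthis : deltaVec v (i₂ x) + b x ≥ ε := hfx.2 hyx
              rw [ha2] at hthis
              have hd := deltaVec_le v k l hkl.symm
              rw [hψx]
              linarith
  have hTcard : T.card = Q.choose 2 := by
    have h := Sym2.card_subtype_not_diag (α := Fin Q)
    rw [Fintype.card_subtype, Fintype.card_fin] at h
    rw [hT]
    convert h using 2
  calc (s.card : ℝ)
      = ∑ a ∈ T, ((s.filter (fun x => Sym2.mk (i₁ x) (i₂ x) = a)).card : ℝ) := by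
        exact_mod_cast hcard
    _ ≤ ∑ _a ∈ T, (Λw * ΛΦ / ε) ^ 2 := Finset.sum_le_sum hfiber
    _ = T.card * (Λw * ΛΦ / ε) ^ 2 := by rw [Finset.sum_const, nsmul_eq_mul]
    _ = (Q.choose 2 : ℝ) * (Λw * ΛΦ / ε) ^ 2 := by rw [hTcard]

/-- bound on the Natarajan dimension with margin `ε` of `Δ H̄`, where
`H̄` is the class of functions implemented by a `Q`-category M-SVM with `b = 0`,
under the hypotheses `Φ(X) ⊆ B(0, Λ_Φ)` and `(1/2) max_{k < l} ‖w_k − w_l‖ ≤ Λ_w`. -/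
theorem margin_natarajan_dim_MSVM
    {X : Type*} {E : Type*} [NormedAddCommGroup E] [InnerProductSpace ℝ E]
    (Q : ℕ) (hQ : 3 ≤ Q) (Φ : X → E) (ΛΦ Λw : ℝ)
    (hΦ : ∀ x : X, ‖Φ x‖ ≤ ΛΦ)
    (Hbar : Set (X → Fin Q → ℝ))
    (hHbar : Hbar = {h | ∃ w : Fin Q → E,
      (∀ k l : Fin Q, k < l → (1 / 2 : ℝ) * ‖w k - w l‖ ≤ Λw) ∧
      h = fun x k => inner ℝ (w k) (Φ x)})
    (ε : ℝ) (hε : 0 < ε) :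
    (NdimMargin ε ((fun h : X → Fin Q → ℝ => deltaVec ∘ h) '' Hbar) : ℝ≥0∞)
      ≤ ENNReal.ofReal ((Q.choose 2 : ℝ) * (Λw * ΛΦ / ε) ^ 2) := by
  subst hHbar
  set R : ℝ := (Q.choose 2 : ℝ) * (Λw * ΛΦ / ε) ^ 2 with hR
  have hR0 : 0 ≤ R := by positivity
  set F : Set (X → Fin Q → ℝ) := (fun h : X → Fin Q → ℝ => deltaVec ∘ h) ''
    {h | ∃ w : Fin Q → E,
      (∀ k l : Fin Q, k < l → (1 / 2 : ℝ) * ‖w k - w l‖ ≤ Λw) ∧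
      h = fun x k => inner ℝ (w k) (Φ x)} with hF
  have hb : NdimMargin ε F ≤ (⌊R⌋₊ : ℕ∞) := by
    refine iSup₂_le ?_
    intro s hs
    have hsR : (s.card : ℝ) ≤ R := shattered_card_le Q Φ ΛΦ Λw hΦ ε hε s hs
    exact_mod_cast Nat.le_floor hsR
  calc (NdimMargin ε F : ℝ≥0∞) ≤ ((⌊R⌋₊ : ℕ∞) : ℝ≥0∞) := ENat.toENNReal_le.mpr hb
    _ = ((⌊R⌋₊ : ℕ) : ℝ≥0∞) := ENat.toENNReal_coe _
    _ ≤ ENNReal.ofReal R := by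
        rw [← ENNReal.ofReal_natCast]
        exact ENNReal.ofReal_le_ofReal (Nat.floor_le hR0)
end
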